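/- arXiv:1705.04560 — 10 statements merged into one kernel-verified Lean document; each statement's English description precedes it below -/
import Mathlib

section
/- Let n be a positive integer with a divisor k satisfying 2k < n, and let γ ∈ F_{q^n} be a root of an irreducible polynomial of degree n/k over F_{q^k}. Then V = {u + u^q γ : u ∈ F_{q^k}} is a Sidon space of dimension k over F_q in F_{q^n}. -/
open Polynomial

/-- A subspace `V` of a field extension `K / F` is a *Sidon space* if for all nonzero
`a, b, c, d ∈ V`, `a * b = c * d` implies `{aF, bF} = {cF, dF}`. -/
def IsSidon {F K : Type*} [Field F] [Field K] [Algebra F K] (V : Submodule F K) : Prop :=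
  ∀ a ∈ V, ∀ b ∈ V, ∀ c ∈ V, ∀ d ∈ V,
    a ≠ 0 → b ≠ 0 → c ≠ 0 → d ≠ 0 → a * b = c * d →
    ({Submodule.span F {a}, Submodule.span F {b}} : Set (Submodule F K)) =
      {Submodule.span F {c}, Submodule.span F {d}}

theorem stmt2 {F L K : Type*} [Field F] [Fintype F] [Field L] [Field K]
    [Algebra F L] [Algebra L K] [Algebra F K] [IsScalarTower F L K]
    (q n k : ℕ) (hq : q = Fintype.card F)
    (hkL : Module.finrank F L = k) (hn : Module.finrank F K = n)
    (hdvd : k ∣ n) (h2k : 2 * k < n)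
    (p : Polynomial L) (hp : Irreducible p) (hdeg : p.natDegree = n / k)
    (γ : K) (hγ : Polynomial.aeval γ p = 0) :
    ∃ V : Submodule F K,
      (V : Set K) = {x | ∃ u : L, x = algebraMap L K u + algebraMap L K (u ^ q) * γ} ∧
      Module.finrank F V = k ∧ IsSidon V := by
  -- basic numerology
  have hk0 : k ≠ 0 := by rintro rfl; obtain rfl : n = 0 := zero_dvd_iff.mp hdvd; omega
  obtain ⟨m, rfl⟩ := hdvd
  have hm3 : 3 ≤ m := by
    by_contra hc
    push_neg at hc
    have := Nat.mul_le_mul_left k (Nat.lt_succ_iff.mp hc)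
    omega
  have hmk : k * m / k = m := Nat.mul_div_cancel_left m (Nat.pos_of_ne_zero hk0)
  haveI : FiniteDimensional F K := FiniteDimensional.of_finrank_pos (by omega : 0 < Module.finrank F K)
  haveI : FiniteDimensional F L := FiniteDimensional.of_finrank_pos (by omega : 0 < Module.finrank F L)
  haveI : FiniteDimensional L K := Module.Finite.right F L K
  -- characteristic / Frobenius facts
  have hq2 : 2 ≤ q := by rw [hq]; exact Fintype.one_lt_card
  set p0 := ringChar F with hp0
  haveI : CharP F p0 := ringChar.charP F
  obtain ⟨m0, hp0prime, hcard⟩ := FiniteField.card F p0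
  haveI := Fact.mk hp0prime
  haveI : CharP L p0 := charP_of_injective_algebraMap (algebraMap F L).injective p0
  have hfrob : ∀ x y : L, (x + y) ^ q = x ^ q + y ^ q := by
    intro x y; rw [hq, hcard]; exact add_pow_char_pow x y p0 m0
  have hpowF : ∀ e : F, e ^ q = e := fun e => by rw [hq]; exact FiniteField.pow_card e
  -- the minimal polynomial of γ over L has degree m ≥ 3
  have hint : IsIntegral L γ := IsIntegral.of_finite L γ
  have hmin : (minpoly L γ).natDegree = m := by
    obtain ⟨cp, hcp⟩ := minpoly.dvd L γ hγ
    rcases hp.isUnit_or_isUnit hcp with hu | hu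
    · exact absurd hu (minpoly.not_isUnit L γ)
    · have hcp0 : cp ≠ 0 := hu.ne_zero
      have := hdeg
      rw [hcp, natDegree_mul (minpoly.ne_zero hint) hcp0,
        natDegree_eq_zero_of_isUnit hu, hmk] at this
      omega
  -- linear independence of 1, γ, γ² over L
  have hindep : ∀ x y z : L,
      algebraMap L K x + algebraMap L K y * γ + algebraMap L K z * γ ^ 2 = 0 →
      x = 0 ∧ y = 0 ∧ z = 0 := by
    intro x y z hxyz
    have haev : aeval γ (C x + C y * X + C z * X ^ 2) = 0 := by
      simp only [map_add, map_mul, map_pow, aeval_C, aeval_X]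
      exact hxyz
    have hg0 : (C x + C y * X + C z * X ^ 2 : L[X]) = 0 := by
      by_contra hne
      have h1 := natDegree_le_of_dvd (minpoly.dvd L γ haev) hne
      rw [hmin] at h1
      have h2 : (C x + C y * X + C z * X ^ 2 : L[X]).natDegree ≤ 2 := by compute_degree
      omega
    refine ⟨?_, ?_, ?_⟩
    · have := congrArg (fun t : L[X] => t.coeff 0) hg0
      simpa using this
    · have := congrArg (fun t : L[X] => t.coeff 1) hg0
      simpa using this
    · have := congrArg (fun t : L[X] => t.coeff 2) hg0
      simpa using this
  -- fixed points of x ↦ x^q in L lie in (the image of) F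
  have hfix : ∀ x : L, x ^ q = x → ∃ e : F, algebraMap F L e = x := by
    intro x hx
    classical
    by_contra hcon
    push_neg at hcon
    have hgne : (X ^ q - X : L[X]) ≠ 0 := by
      intro h0
      have hco : (X ^ q - X : L[X]).coeff q = 1 := by
        simp only [coeff_sub, coeff_X_pow, coeff_X, if_pos rfl, if_neg (by omega : ¬1 = q)]
        norm_num
      rw [h0] at hco
      simp at hco
    have hdegg : (X ^ q - X : L[X]).natDegree ≤ q := by
      refine le_trans (natDegree_sub_le _ _) ?_
      simp [natDegree_X_pow]
      omega
    have hsub : insert x (Finset.univ.image (algebraMap F L)) ⊆ (X ^ q - X : L[X]).roots.toFinset := by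
      intro t ht
      rw [Multiset.mem_toFinset, mem_roots hgne]
      have htq : t ^ q = t := by
        simp only [Finset.mem_insert, Finset.mem_image] at ht
        rcases ht with rfl | ⟨e, _, rfl⟩
        · exact hx
        · rw [← map_pow, hpowF]
      simp [IsRoot, htq]
    have hcard2 : (insert x (Finset.univ.image (algebraMap F L))).card = q + 1 := by
      rw [Finset.card_insert_of_notMem (by
        simp only [Finset.mem_image]
        rintro ⟨e, -, he⟩
        exact hcon e he),
        Finset.card_image_of_injective _ (algebraMap F L).injective, Finset.card_univ, hq]
    have h1 := Finset.card_le_card hsub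
    have h2 := Multiset.toFinset_card_le (X ^ q - X : L[X]).roots
    have h3 := (X ^ q - X : L[X]).card_roots'
    omega
  -- ratio lemma
  have ratio : ∀ vv ww : L, vv ≠ 0 → ww ≠ 0 → vv ^ q * ww = vv * ww ^ q →
      ∃ e : F, e ≠ 0 ∧ vv = algebraMap F L e * ww := by
    intro vv ww hvv hww hrel
    have hx : (vv / ww) ^ q = vv / ww := by
      rw [div_pow, div_eq_div_iff (pow_ne_zero _ hww) hww]
      exact hrel
    obtain ⟨e, he⟩ := hfix _ hx
    have hd0 : vv / ww ≠ 0 := div_ne_zero hvv hww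
    refine ⟨e, ?_, ?_⟩
    · rintro rfl; rw [map_zero] at he; exact hd0 he.symm
    · rw [he]; field_simp
  -- the linear map u ↦ u + u^q γ
  set ψ : L →ₗ[F] K :=
    { toFun := fun u => algebraMap L K u + algebraMap L K (u ^ q) * γ
      map_add' := fun x y => by
        rw [hfrob]
        simp only [map_add]
        ring
      map_smul' := fun e x => by
        dsimp only [RingHom.id_apply]
        have h1 : (e • x) ^ q = algebraMap F L e * x ^ q := by
          rw [Algebra.smul_def, mul_pow, ← map_pow, hpowF]
        rw [h1, Algebra.smul_def e x, Algebra.smul_def e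
            (algebraMap L K x + algebraMap L K (x ^ q) * γ),
          IsScalarTower.algebraMap_apply F L K]
        simp only [map_mul]
        ring } with hψdef
  have hψ : ∀ u : L, ψ u = algebraMap L K u + algebraMap L K (u ^ q) * γ := fun u => rfl
  have hinj : Function.Injective ψ := by
    rw [injective_iff_map_eq_zero]
    intro u hu0
    have : algebraMap L K u + algebraMap L K (u ^ q) * γ + algebraMap L K 0 * γ ^ 2 = 0 := by
      rw [map_zero, zero_mul, add_zero, ← hψ]; exact hu0
    exact (hindep u (u ^ q) 0 this).1
  have hsmul : ∀ (e : F) (x : L), ψ (algebraMap F L e * x) = e • ψ x := by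
    intro e x
    rw [← Algebra.smul_def]
    exact map_smul ψ e x
  refine ⟨LinearMap.range ψ, ?_, ?_, ?_⟩
  · ext x
    simp only [SetLike.mem_coe, LinearMap.mem_range, Set.mem_setOf_eq]
    constructor
    · rintro ⟨u, hu⟩; exact ⟨u, by rw [← hu, hψ]⟩
    · rintro ⟨u, hu⟩; exact ⟨u, by rw [hu, hψ]⟩
  · rw [LinearMap.finrank_range_of_inj hinj, hkL]
  · intro a ha b hb c hc d hd ha0 hb0 hc0 hd0 habcd
    obtain ⟨u, hu⟩ := ha
    obtain ⟨v, hv⟩ := hb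
    obtain ⟨w, hw⟩ := hc
    obtain ⟨z, hz⟩ := hd
    have hu0 : u ≠ 0 := by rintro rfl; exact ha0 (by rw [← hu, map_zero])
    have hv0 : v ≠ 0 := by rintro rfl; exact hb0 (by rw [← hv, map_zero])
    have hw0 : w ≠ 0 := by rintro rfl; exact hc0 (by rw [← hw, map_zero])
    have hz0 : z ≠ 0 := by rintro rfl; exact hd0 (by rw [← hz, map_zero])
    -- expand the products
    have hXY : algebraMap L K (u * v) + algebraMap L K (u * v ^ q + u ^ q * v) * γ +
        algebraMap L K (u ^ q * v ^ q) * γ ^ 2 =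
        algebraMap L K (w * z) + algebraMap L K (w * z ^ q + w ^ q * z) * γ +
        algebraMap L K (w ^ q * z ^ q) * γ ^ 2 := by
      have h1 : a * b = algebraMap L K (u * v) + algebraMap L K (u * v ^ q + u ^ q * v) * γ +
          algebraMap L K (u ^ q * v ^ q) * γ ^ 2 := by
        rw [← hu, ← hv, hψ, hψ]
        simp only [map_add, map_mul]
        ring
      have h2 : c * d = algebraMap L K (w * z) + algebraMap L K (w * z ^ q + w ^ q * z) * γ +
          algebraMap L K (w ^ q * z ^ q) * γ ^ 2 := by
        rw [← hw, ← hz, hψ, hψ]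
        simp only [map_add, map_mul]
        ring
      rw [← h1, ← h2]; exact habcd
    have key : algebraMap L K (u * v - w * z) +
        algebraMap L K (u * v ^ q + u ^ q * v - (w * z ^ q + w ^ q * z)) * γ +
        algebraMap L K (u ^ q * v ^ q - w ^ q * z ^ q) * γ ^ 2 = 0 := by
      simp only [map_sub, map_add, map_mul] at hXY ⊢
      linear_combination hXY
    obtain ⟨e1, e2, e3⟩ := hindep _ _ _ key
    have P_eq : u * v = w * z := sub_eq_zero.mp e1
    have S_eq : u * v ^ q + u ^ q * v = w * z ^ q + w ^ q * z := sub_eq_zero.mp e2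
    have Q_eq : u ^ q * v ^ q = w ^ q * z ^ q := sub_eq_zero.mp e3
    have key2 : (w * z ^ q - u * v ^ q) * (w * z ^ q - u ^ q * v) = 0 := by
      linear_combination (-(w * z ^ q)) * S_eq + (u * v) * Q_eq + (w ^ q * z ^ q) * P_eq
    rcases mul_eq_zero.mp key2 with h | h
    · -- Case A : w z^q = u v^q, so vF = zF and wF = uF
      have h' : w * z ^ q = u * v ^ q := sub_eq_zero.mp h
      have hw2 : w * (z ^ q * v) = w * (z * v ^ q) := by
        linear_combination v * h' + v ^ q * P_eq
      have hzv := mul_left_cancel₀ hw0 hw2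
      obtain ⟨e, he0, hve⟩ := ratio v z hv0 hz0 (by linear_combination -hzv)
      have hwe : w = algebraMap F L e * u := by
        refine mul_right_cancel₀ hz0 ?_
        rw [← P_eq, hve]; ring
      have hca : Submodule.span F {c} = Submodule.span F {a} := by
        have : c = e • a := by rw [← hu, ← hw, hwe, hsmul]
        rw [this]
        exact Submodule.span_singleton_smul_eq (isUnit_iff_ne_zero.mpr he0) a
      have hbd : Submodule.span F {b} = Submodule.span F {d} := by
        have : b = e • d := by rw [← hz, ← hv, hve, hsmul]
        rw [this]
        exact Submodule.span_singleton_smul_eq (isUnit_iff_ne_zero.mpr he0) d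
      rw [hca, hbd]
    · -- Case B : w z^q = u^q v, so vF = wF and zF = uF
      have h' : w * z ^ q = u ^ q * v := sub_eq_zero.mp h
      have hw2 : z ^ q * (w * v ^ q) = z ^ q * (w ^ q * v) := by
        linear_combination v ^ q * h' + v * Q_eq
      have hwv := mul_left_cancel₀ (pow_ne_zero q hz0) hw2
      obtain ⟨e, he0, hve⟩ := ratio v w hv0 hw0 (by linear_combination hwv)
      have hze : z = algebraMap F L e * u := by
        refine mul_left_cancel₀ hw0 ?_
        rw [← P_eq, hve]; ring
      have hbc : Submodule.span F {b} = Submodule.span F {c} := by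
        have : b = e • c := by rw [← hw, ← hv, hve, hsmul]
        rw [this]
        exact Submodule.span_singleton_smul_eq (isUnit_iff_ne_zero.mpr he0) c
      have hda : Submodule.span F {d} = Submodule.span F {a} := by
        have : d = e • a := by rw [← hu, ← hz, hze, hsmul]
        rw [this]
        exact Submodule.span_singleton_smul_eq (isUnit_iff_ne_zero.mpr he0) a
      rw [hbc, hda]
      exact Set.pair_comm _ _
end

section
/- Let q ≥ 3 be a prime power, k a positive integer, n = 2k, and let γ ∈ F_{q^n} be a root of an irreducible polynomial x² + bx + c over F_{q^k} where c is not a (q−1)st power of any element of F_{q^k}. Then V = {u + u^q γ : u ∈ F_{q^k}} is a Sidon space of dimension k in F_{q^n}. -/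
open Polynomial

section Aux

variable {F L : Type*} [Field F] [Fintype F] [Field L] [Algebra F L]

lemma frob_add (x y : L) :
    (x + y) ^ Fintype.card F = x ^ Fintype.card F + y ^ Fintype.card F := by
  set p := ringChar F with hp
  haveI : CharP F p := ringChar.charP F
  obtain ⟨m, hprime, hcard⟩ := FiniteField.card F p
  haveI := Fact.mk hprime
  haveI : CharP L p := charP_of_injective_algebraMap (algebraMap F L).injective p
  rw [hcard]
  exact add_pow_char_pow ..

lemma fix_mem {x : L} (h : x ^ Fintype.card F = x) : ∃ a : F, algebraMap F L a = x := by
  classical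
  by_contra hx
  push_neg at hx
  set q := Fintype.card F with hq
  have hq2 : 2 ≤ q := Fintype.one_lt_card
  set P : L[X] := X ^ q - X with hP
  have hdeg : P.natDegree = q := by
    have h1 : P.coeff q = 1 := by
      rw [hP, coeff_sub, coeff_X_pow, coeff_X, if_pos rfl, if_neg (by omega : ¬ 1 = q)]
      ring
    refine le_antisymm ?_ (le_natDegree_of_ne_zero (h1 ▸ one_ne_zero))
    refine (natDegree_sub_le _ _).trans ?_
    simp only [natDegree_X_pow, natDegree_X]
    omega
  have hP0 : P ≠ 0 := fun h0 => by simp [h0] at hdeg; omega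
  let T : Finset L := insert x (Finset.univ.image (algebraMap F L))
  have hTsub : T ⊆ P.roots.toFinset := by
    intro t ht
    rw [Multiset.mem_toFinset, mem_roots hP0]
    rcases Finset.mem_insert.mp ht with rfl | ht
    · simp [hP, IsRoot, h]
    · obtain ⟨a, _, rfl⟩ := Finset.mem_image.mp ht
      have hpc : (algebraMap F L a) ^ q = algebraMap F L a := by
        rw [← map_pow, hq, FiniteField.pow_card]
      simp [hP, IsRoot, hpc]
  have hTcard : T.card = q + 1 := by
    rw [Finset.card_insert_of_notMem (by simp only [Finset.mem_image, Finset.mem_univ, true_and, not_exists]; exact fun a => hx a),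
      Finset.card_image_of_injective _ (algebraMap F L).injective, Finset.card_univ]
  have : q + 1 ≤ q := by
    calc q + 1 = T.card := hTcard.symm
    _ ≤ P.roots.toFinset.card := Finset.card_le_card hTsub
    _ ≤ Multiset.card P.roots := Multiset.toFinset_card_le _
    _ ≤ P.natDegree := Polynomial.card_roots' P
    _ = q := hdeg
  omega

end Aux

theorem stmt3 {F L K : Type*} [Field F] [Fintype F] [Field L] [Field K]
    [Algebra F L] [Algebra L K] [Algebra F K] [IsScalarTower F L K]
    (q n k : ℕ) (hq : q = Fintype.card F) (hq3 : 3 ≤ q) (hkpos : 0 < k)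
    (hkL : Module.finrank F L = k) (hn : Module.finrank F K = n) (hnk : n = 2 * k)
    (b c : L) (hc : ∀ y : L, y ^ (q - 1) ≠ c)
    (hp : Irreducible (X ^ 2 + C b * X + C c))
    (γ : K) (hγ : Polynomial.aeval γ (X ^ 2 + C b * X + C c) = 0) :
    ∃ V : Submodule F K,
      (V : Set K) = {x | ∃ u : L, x = algebraMap L K u + algebraMap L K (u ^ q) * γ} ∧
      Module.finrank F V = k ∧ IsSidon V := by
  subst hq
  set q := Fintype.card F with hq
  set A : L →+* K := algebraMap L K with hA
  set A' : F →+* L := algebraMap F L with hA'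
  have hq0 : q ≠ 0 := by omega
  -- the Frobenius ring hom
  let σ : L →+* L :=
    { toFun := fun x => x ^ q
      map_one' := one_pow q
      map_mul' := fun x y => mul_pow x y q
      map_zero' := zero_pow hq0
      map_add' := frob_add }
  have hσ : ∀ x : L, σ x = x ^ q := fun _ => rfl
  -- γ is not in the image of L
  have hdeg2 : (X ^ 2 + C b * X + C c : L[X]).natDegree = 2 := by
    have := Polynomial.natDegree_quadratic (one_ne_zero (α := L)) (b := b) (c := c)
    simpa using this
  have hγL : ∀ l : L, γ ≠ A l := by
    intro l hl
    have hroot : Polynomial.aeval l (X ^ 2 + C b * X + C c : L[X]) = 0 := by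
      have h2 : Polynomial.aeval ((Algebra.ofId L K) l) (X ^ 2 + C b * X + C c : L[X]) = 0 := by
        rw [show (Algebra.ofId L K) l = A l from rfl, ← hl]; exact hγ
      rw [Polynomial.aeval_algHom_apply] at h2
      exact (_root_.map_eq_zero (f := (Algebra.ofId L K).toRingHom)).mp h2
    have hdvd : (X - C l) ∣ (X ^ 2 + C b * X + C c : L[X]) := by
      refine Polynomial.dvd_iff_isRoot.mpr ?_
      simpa [Polynomial.IsRoot, Polynomial.aeval_def, Polynomial.eval] using hroot
    obtain ⟨g, hg⟩ := hdvd
    rcases hp.isUnit_or_isUnit hg with hu | hu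
    · exact Polynomial.not_isUnit_X_sub_C l hu
    · have hgne : g ≠ 0 := fun h0 => by simp [h0] at hg; exact hp.ne_zero hg
      have : (2 : ℕ) = 1 + 0 := by
        rw [← hdeg2, hg, Polynomial.natDegree_mul (Polynomial.X_sub_C_ne_zero l) hgne,
          Polynomial.natDegree_X_sub_C, Polynomial.natDegree_eq_zero_of_isUnit hu]
      omega
  -- linear independence of 1, γ over L
  have hind : ∀ x y : L, A x + A y * γ = 0 → x = 0 ∧ y = 0 := by
    intro x y h
    by_cases hy : y = 0
    · subst hy
      simp only [map_zero, zero_mul, add_zero] at h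
      exact ⟨(_root_.map_eq_zero (f := A)).mp h, rfl⟩
    · exfalso
      apply hγL (-(x / y))
      have hAy : A y ≠ 0 := fun h0 => hy ((_root_.map_eq_zero (f := A)).mp h0)
      rw [map_neg, map_div₀, ← neg_div, eq_div_iff hAy]
      linear_combination h
  have hind' : ∀ x y x' y' : L, A x + A y * γ = A x' + A y' * γ → x = x' ∧ y = y' := by
    intro x y x' y' h
    have := hind (x - x') (y - y') (by rw [map_sub, map_sub]; ring_nf; linear_combination h)
    exact ⟨sub_eq_zero.mp this.1, sub_eq_zero.mp this.2⟩
  -- the quadratic relation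
  have γsq : γ ^ 2 = -(A c) - A b * γ := by
    have h2 : γ ^ 2 + A b * γ + A c = 0 := by
      simpa [map_add, map_mul, map_pow] using hγ
    linear_combination h2
  -- the linear map
  have hsmul : ∀ (m : F) (u : L), (m • u) ^ q = m • u ^ q := by
    intro m u
    rw [Algebra.smul_def, Algebra.smul_def, mul_pow, ← map_pow, FiniteField.pow_card]
  let φ : L →ₗ[F] K :=
    { toFun := fun u => A u + A (u ^ q) * γ
      map_add' := by
        intro u v
        show A (u + v) + A ((u + v) ^ q) * γ = (A u + A (u ^ q) * γ) + (A v + A (v ^ q) * γ)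
        rw [hq, frob_add, map_add, map_add]
        ring
      map_smul' := by
        intro m u
        show A (m • u) + A ((m • u) ^ q) * γ = (RingHom.id F) m • (A u + A (u ^ q) * γ)
        have hpc : ((algebraMap F L m : L)) ^ q = algebraMap F L m := by
          rw [hq, ← map_pow, FiniteField.pow_card]
        simp only [hsmul, Algebra.smul_def, mul_pow, hpc, map_mul,
          IsScalarTower.algebraMap_apply F L K, RingHom.id_apply]
        ring }
  have hφ : ∀ u : L, φ u = A u + A (u ^ q) * γ := fun _ => rfl
  have hφ0 : ∀ u : L, φ u = 0 → u = 0 := fun u h => (hind u (u ^ q) h).1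
  have hinj : Function.Injective φ := by
    intro u v h
    have := hφ0 (u - v) (by rw [map_sub, h, sub_self])
    exact sub_eq_zero.mp this
  refine ⟨LinearMap.range φ, ?_, ?_, ?_⟩
  · ext x
    simp only [SetLike.mem_coe, LinearMap.mem_range, Set.mem_setOf_eq]
    exact ⟨fun ⟨u, hu⟩ => ⟨u, hu.symm⟩, fun ⟨u, hu⟩ => ⟨u, hu.symm⟩⟩
  · rw [LinearMap.finrank_range_of_inj hinj, hkL]
  · -- Sidon property
    intro a1 ha1 b1 hb1 c1 hc1 d1 hd1 ha0 hb0 hc0 hd0 hmul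
    obtain ⟨u, hu⟩ := ha1
    obtain ⟨v, hv⟩ := hb1
    obtain ⟨w, hw⟩ := hc1
    obtain ⟨z, hz⟩ := hd1
    have hu0 : u ≠ 0 := fun h => ha0 (by rw [← hu, h, map_zero])
    have hv0 : v ≠ 0 := fun h => hb0 (by rw [← hv, h, map_zero])
    have hw0 : w ≠ 0 := fun h => hc0 (by rw [← hw, h, map_zero])
    have hz0 : z ≠ 0 := fun h => hd0 (by rw [← hz, h, map_zero])
    -- product expansion
    have hprod : ∀ x y : L, φ x * φ y =
        A (x * y - c * (x ^ q * y ^ q)) + A (x * y ^ q + x ^ q * y - b * (x ^ q * y ^ q)) * γ := by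
      intro x y
      have h1 : φ x * φ y =
          A (x * y) + A (x * y ^ q + x ^ q * y) * γ + A (x ^ q * y ^ q) * γ ^ 2 := by
        rw [hφ, hφ]
        simp only [map_add, map_mul]
        ring
      rw [h1, γsq]
      simp only [map_sub, map_add, map_mul]
      ring
    have hEq : A (u * v - c * (u ^ q * v ^ q)) + A (u * v ^ q + u ^ q * v - b * (u ^ q * v ^ q)) * γ
        = A (w * z - c * (w ^ q * z ^ q))
          + A (w * z ^ q + w ^ q * z - b * (w ^ q * z ^ q)) * γ := by
      rw [← hprod, ← hprod, hu, hv, hw, hz]; exact hmul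
    obtain ⟨E1, E2⟩ := hind' _ _ _ _ hEq
    -- step 1 : u * v = w * z
    have huv : u * v = w * z := by
      by_contra hne
      apply hc (u * v - w * z)⁻¹
      set e := u * v - w * z with he_def
      have he0 : e ≠ 0 := sub_ne_zero.mpr hne
      have he : e = c * e ^ q := by
        have hsub : e ^ q = (u * v) ^ q - (w * z) ^ q := map_sub σ (u * v) (w * z)
        rw [hsub, mul_pow, mul_pow]
        linear_combination E1
      have hpow : e ^ q = e ^ (q - 1) * e := by
        rw [← pow_succ]
        congr 1
        omega
      have h1 : e * 1 = e * (c * e ^ (q - 1)) := by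
        rw [hpow] at he
        linear_combination he
      have h2 : (1 : L) = c * e ^ (q - 1) := mul_left_cancel₀ he0 h1
      have h3 : c = (e ^ (q - 1))⁻¹ :=
        eq_inv_of_mul_eq_one_left (by linear_combination -h2)
      rw [inv_pow, ← h3]
    have hq' : u ^ q * v ^ q = w ^ q * z ^ q := by
      rw [← mul_pow, huv, mul_pow]
    have E2' : u * v ^ q + u ^ q * v = w * z ^ q + w ^ q * z := by
      linear_combination E2 + b * hq'
    -- the two cases
    have hcases : u * v ^ q = w * z ^ q ∨ u * v ^ q = w ^ q * z := by
      have key : (u * v ^ q - w * z ^ q) * (u * v ^ q - w ^ q * z) = 0 := by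
        linear_combination (u * v ^ q) * E2' - (w * z) * hq' - (u ^ q * v ^ q) * huv
      rcases mul_eq_zero.mp key with h | h
      · exact Or.inl (sub_eq_zero.mp h)
      · exact Or.inr (sub_eq_zero.mp h)
    rcases hcases with h1 | h1
    · -- case A : spans match directly
      have hvz : v ^ q * z = z ^ q * v := by
        have h3 : (u * w) * (v ^ q * z) = (u * w) * (z ^ q * v) := by
          linear_combination (w * z) * h1 - (w * z ^ q) * huv
        exact mul_left_cancel₀ (mul_ne_zero hu0 hw0) h3
      have hfix : (v / z) ^ q = v / z := by
        rw [div_pow, div_eq_div_iff (pow_ne_zero q hz0) hz0]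
        linear_combination hvz
      obtain ⟨lam, hlam⟩ := fix_mem hfix
      have hlam0 : lam ≠ 0 := by
        intro h0
        rw [h0, map_zero] at hlam
        exact hv0 (by rcases div_eq_zero_iff.mp hlam.symm with h | h; exacts [h, absurd h hz0])
      have hvzl : v = lam • z := by
        rw [Algebra.smul_def, hlam]
        field_simp
      have hwul : w = lam • u := by
        have : u * v = (lam • u) * z := by
          rw [hvzl, Algebra.smul_def, Algebra.smul_def]; ring
        rw [huv] at this
        exact mul_right_cancel₀ hz0 this
      have hcspan : Submodule.span F {c1} = Submodule.span F {a1} := by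
        rw [← hw, ← hu, hwul, map_smul]
        exact Submodule.span_singleton_smul_eq (IsUnit.mk0 lam hlam0) _
      have hbspan : Submodule.span F {b1} = Submodule.span F {d1} := by
        rw [← hv, ← hz, hvzl, map_smul]
        exact Submodule.span_singleton_smul_eq (IsUnit.mk0 lam hlam0) _
      rw [hcspan, hbspan]
    · -- case B : spans match crosswise
      have hvw : v ^ q * w = w ^ q * v := by
        have h3 : (u * z) * (v ^ q * w) = (u * z) * (w ^ q * v) := by
          linear_combination (w * z) * h1 - (w ^ q * z) * huv
        exact mul_left_cancel₀ (mul_ne_zero hu0 hz0) h3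
      have hfix : (v / w) ^ q = v / w := by
        rw [div_pow, div_eq_div_iff (pow_ne_zero q hw0) hw0]
        linear_combination hvw
      obtain ⟨lam, hlam⟩ := fix_mem hfix
      have hlam0 : lam ≠ 0 := by
        intro h0
        rw [h0, map_zero] at hlam
        exact hv0 (by rcases div_eq_zero_iff.mp hlam.symm with h | h; exacts [h, absurd h hw0])
      have hvwl : v = lam • w := by
        rw [Algebra.smul_def, hlam]
        field_simp
      have hzul : z = lam • u := by
        have : u * (lam • w) = w * z := by rw [← hvwl, huv]
        rw [Algebra.smul_def] at this
        have h4 : w * (algebraMap F L lam * u) = w * z := by linear_combination this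
        rw [Algebra.smul_def]
        exact (mul_left_cancel₀ hw0 h4).symm
      have hbspan : Submodule.span F {b1} = Submodule.span F {c1} := by
        rw [← hv, ← hw, hvwl, map_smul]
        exact Submodule.span_singleton_smul_eq (IsUnit.mk0 lam hlam0) _
      have hdspan : Submodule.span F {d1} = Submodule.span F {a1} := by
        rw [← hz, ← hu, hzul, map_smul]
        exact Submodule.span_singleton_smul_eq (IsUnit.mk0 lam hlam0) _
      rw [← hbspan, hdspan, Set.pair_comm]
end

section
/- For any prime power q and integer n ≥ 6, there exists a Sidon space in F_{q^n} of dimension ⌊(n−2)/4⌋ over F_q. -/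
open Polynomial

private lemma aux_span_smul {F K : Type*} [Field F] [Field K] [Algebra F K]
    (l : F) (hl : l ≠ 0) (x : K) :
    Submodule.span F {algebraMap F K l * x} = Submodule.span F {x} := by
  rw [← Algebra.smul_def]
  exact Submodule.span_singleton_smul_eq hl.isUnit x

/-- The fixed points of `z ↦ z ^ |F|` in `K` are exactly the image of `F`. -/
private lemma aux_fixed {F K : Type*} [Field F] [Fintype F] [Field K] [Algebra F K]
    (z : K) (hz : z ^ Fintype.card F = z) : ∃ l : F, algebraMap F K l = z := by
  classical
  have hq2 : 1 < Fintype.card F := Fintype.one_lt_card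
  set q := Fintype.card F with hq
  set P : Polynomial K := X ^ q - X with hP
  have hPdeg : P.natDegree = q := by
    have h1 : (X : K[X]).natDegree < ((X : K[X]) ^ q).natDegree := by
      simpa using hq2
    rw [hP, Polynomial.natDegree_sub_eq_left_of_natDegree_lt h1, natDegree_X_pow]
  have hP0 : P ≠ 0 := by
    intro h
    rw [h, natDegree_zero] at hPdeg
    omega
  have hmem : ∀ w : K, w ^ q = w → w ∈ P.roots := by
    intro w hw
    rw [mem_roots hP0]
    simp [hP, IsRoot, hw]
  have hsub : Finset.univ.image (algebraMap F K) ⊆ P.roots.toFinset := by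
    intro w hw
    simp only [Finset.mem_image] at hw
    obtain ⟨l, -, rfl⟩ := hw
    exact Multiset.mem_toFinset.mpr (hmem _ (by rw [← map_pow, FiniteField.pow_card]))
  have hcard1 : (Finset.univ.image (algebraMap F K)).card = q := by
    rw [Finset.card_image_of_injective _ (algebraMap F K).injective, Finset.card_univ]
  have hcard2 : P.roots.toFinset.card ≤ q := by
    calc P.roots.toFinset.card ≤ Multiset.card P.roots := Multiset.toFinset_card_le _
      _ ≤ P.natDegree := Polynomial.card_roots' P
      _ = q := hPdeg
  have heq := Finset.eq_of_subset_of_card_le hsub (by omega)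
  have hzmem : z ∈ P.roots.toFinset := Multiset.mem_toFinset.mpr (hmem z hz)
  rw [← heq] at hzmem
  simp only [Finset.mem_image] at hzmem
  obtain ⟨l, -, hl⟩ := hzmem
  exact ⟨l, hl⟩

theorem stmt7 {F K : Type*} [Field F] [Fintype F] [Field K] [Algebra F K]
    (n : ℕ) (hn : Module.finrank F K = n) (h6 : 6 ≤ n) :
    ∃ V : Submodule F K, Module.finrank F V = (n - 2) / 4 ∧ IsSidon V := by
  classical
  set q := Fintype.card F with hq
  have hq2 : 2 ≤ q := Fintype.one_lt_card
  have hqne : q ≠ 0 := by omega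
  set k := (n - 2) / 4 with hk
  have hk1 : 1 ≤ k := by
    rw [hk]
    omega
  have h4k : 4 * k + 2 ≤ n := by
    have h := Nat.div_mul_le_self (n - 2) 4
    rw [hk]
    omega
  -- `K` is a finite field
  have hfd : FiniteDimensional F K := FiniteDimensional.of_finrank_pos (by omega)
  have hKfin : Finite K := Module.finite_of_finite F
  haveI : Fintype K := Fintype.ofFinite K
  -- characteristic facts
  obtain ⟨p, hcp⟩ := CharP.exists F
  haveI : CharP F p := hcp
  obtain ⟨e, hp_prime, hcard⟩ := FiniteField.card F p
  haveI : Fact p.Prime := ⟨hp_prime⟩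
  haveI : CharP K p := charP_of_injective_algebraMap (algebraMap F K).injective p
  have hfrob_add : ∀ x y : K, (x + y) ^ q = x ^ q + y ^ q := by
    intro x y
    rw [hq, hcard]
    exact add_pow_char_pow ..
  have hfrob_sub : ∀ x y : K, (x - y) ^ q = x ^ q - y ^ q := by
    intro x y
    rw [hq, hcard]
    exact sub_pow_char_pow ..
  have hFq : ∀ l : F, l ^ q = l := fun l => FiniteField.pow_card l
  -- a k-dimensional subspace U of K
  have hkn : k ≤ Module.finrank F K := by rw [hn]; omega
  set bK := Module.finBasis F K with hbK
  set emb : Fin k → Fin (Module.finrank F K) := fun i => ⟨i.1, lt_of_lt_of_le i.2 hkn⟩ with hemb0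
  have hembinj : Function.Injective emb := by
    intro i j hij
    simpa [hemb0, Fin.ext_iff] using hij
  set v : Fin k → K := fun i => bK (emb i) with hv
  have hli : LinearIndependent F v := bK.linearIndependent.comp emb hembinj
  set U : Submodule F K := Submodule.span F (Set.range v) with hU
  have hUrank : Module.finrank F U = k := by
    rw [hU, finrank_span_eq_card hli, Fintype.card_fin]
  haveI : Fintype U := Fintype.ofFinite U
  have hcardU : Fintype.card U = q ^ k := by
    rw [Module.card_eq_pow_finrank (K := F) (V := U), hUrank]
  have hcardK : Fintype.card K = q ^ n := by
    rw [Module.card_eq_pow_finrank (K := F) (V := K), hn]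
  -- choose a good γ by counting
  obtain ⟨γ, hγ0, hγ1, hγ2⟩ :
      ∃ γ : K, γ ≠ 0 ∧ (∀ u : K, u ∈ U → u ≠ 0 → u + u ^ q * γ ≠ 0) ∧
        (∀ a b c d : K, a ∈ U → b ∈ U → c ∈ U → d ∈ U → a * b ≠ c * d →
          (a * b - c * d) + (a * b ^ q + a ^ q * b - (c * d ^ q + c ^ q * d)) * γ
            + (a * b - c * d) ^ q * γ ^ 2 ≠ 0) := by
    set bad1 : Finset K := Finset.univ.image (fun u : U => -(u : K) / (u : K) ^ q) with hbad1
    set pol : U × U × U × U → K[X] := fun t =>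
      C (((t.1 : K) * (t.2.1 : K) - (t.2.2.1 : K) * (t.2.2.2 : K)) ^ q) * X ^ 2
        + C ((t.1 : K) * (t.2.1 : K) ^ q + (t.1 : K) ^ q * (t.2.1 : K)
            - ((t.2.2.1 : K) * (t.2.2.2 : K) ^ q + (t.2.2.1 : K) ^ q * (t.2.2.2 : K))) * X
        + C ((t.1 : K) * (t.2.1 : K) - (t.2.2.1 : K) * (t.2.2.2 : K)) with hpol
    set bad2 : Finset K := Finset.univ.biUnion (fun t => (pol t).roots.toFinset) with hbad2
    set bad : Finset K := insert 0 (bad1 ∪ bad2) with hbad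
    have hb1 : bad1.card ≤ q ^ k := by
      calc bad1.card ≤ (Finset.univ : Finset U).card := Finset.card_image_le
        _ = q ^ k := by rw [Finset.card_univ, hcardU]
    have hb2 : bad2.card ≤ 2 * (q ^ k) ^ 4 := by
      calc bad2.card ≤ ∑ t : U × U × U × U, (pol t).roots.toFinset.card :=
            Finset.card_biUnion_le
        _ ≤ ∑ _t : U × U × U × U, 2 := Finset.sum_le_sum (fun t _ =>
            le_trans (Multiset.toFinset_card_le _)
              (le_trans (Polynomial.card_roots' _) Polynomial.natDegree_quadratic_le))
        _ = Fintype.card (U × U × U × U) * 2 := by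
            rw [Finset.sum_const, smul_eq_mul, Finset.card_univ]
        _ = 2 * (q ^ k) ^ 4 := by
            simp only [Fintype.card_prod, hcardU]
            ring
    have hblt : bad.card < Fintype.card K := by
      have h1 : bad.card ≤ 1 + (q ^ k + 2 * (q ^ k) ^ 4) := by
        calc bad.card ≤ (bad1 ∪ bad2).card + 1 := Finset.card_insert_le _ _
          _ ≤ bad1.card + bad2.card + 1 := by
              have := Finset.card_union_le bad1 bad2
              omega
          _ ≤ 1 + (q ^ k + 2 * (q ^ k) ^ 4) := by omega
      have hQ2 : 2 ≤ q ^ k := by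
        calc 2 = 2 ^ 1 := by norm_num
          _ ≤ q ^ k := Nat.pow_le_pow_left hq2 1 |>.trans (Nat.pow_le_pow_right (by omega) hk1)
      have hQle : q ^ k ≤ (q ^ k) ^ 4 := Nat.le_self_pow (by norm_num) _
      have hQ1 : 1 < (q ^ k) ^ 4 := by
        calc 1 < 2 := by norm_num
          _ ≤ q ^ k := hQ2
          _ ≤ (q ^ k) ^ 4 := hQle
      have h2 : q ^ (4 * k + 2) ≤ q ^ n := Nat.pow_le_pow_right (by omega) h4k
      have h3 : q ^ (4 * k + 2) = q ^ 2 * (q ^ k) ^ 4 := by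
        rw [← pow_mul, ← pow_add]
        ring_nf
      have h4 : 4 * (q ^ k) ^ 4 ≤ q ^ 2 * (q ^ k) ^ 4 := by
        have : 4 ≤ q ^ 2 := by nlinarith
        exact Nat.mul_le_mul_right _ this
      rw [hcardK]
      omega
    obtain ⟨γ, hγ⟩ : ∃ γ : K, γ ∉ bad := by
      by_contra hcon
      push_neg at hcon
      have hsub : (Finset.univ : Finset K) ⊆ bad := fun γ _ => hcon γ
      have := Finset.card_le_card hsub
      rw [Finset.card_univ] at this
      omega
    refine ⟨γ, ?_, ?_, ?_⟩
    · rintro rfl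
      exact hγ (Finset.mem_insert_self _ _)
    · intro u hu hu0 heq
      apply hγ
      have hne : (u : K) ^ q ≠ 0 := pow_ne_zero _ hu0
      have hγeq : γ = -u / u ^ q := by
        rw [eq_div_iff hne]
        linear_combination heq
      apply Finset.mem_insert_of_mem
      apply Finset.mem_union_left
      rw [hγeq, hbad1]
      exact Finset.mem_image.mpr ⟨⟨u, hu⟩, Finset.mem_univ _, rfl⟩
    · intro a b c d ha hb hc hd hne heq
      apply hγ
      apply Finset.mem_insert_of_mem
      apply Finset.mem_union_right
      rw [hbad2]
      apply Finset.mem_biUnion.mpr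
      refine ⟨(⟨a, ha⟩, ⟨b, hb⟩, ⟨c, hc⟩, ⟨d, hd⟩), Finset.mem_univ _, ?_⟩
      rw [Multiset.mem_toFinset, mem_roots']
      constructor
      · intro h0
        apply sub_ne_zero.mpr hne
        have := congrArg (fun P => Polynomial.eval 0 P) h0
        simpa [hpol] using this
      · show Polynomial.IsRoot _ γ
        simp only [hpol, IsRoot, eval_add, eval_mul, eval_pow, eval_C, eval_X]
        linear_combination heq
  -- the linear map u ↦ u + u^q γ
  set ψ : K →ₗ[F] K :=
    { toFun := fun z => z + z ^ q * γ
      map_add' := by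
        intro x y
        rw [hfrob_add]
        ring
      map_smul' := by
        intro m x
        simp only [RingHom.id_apply, Algebra.smul_def]
        rw [mul_pow, ← map_pow, hFq]
        ring } with hψdef
  have hψ : ∀ z : K, ψ z = z + z ^ q * γ := fun z => rfl
  have hinj : Function.Injective (ψ.comp U.subtype) := by
    rw [← LinearMap.ker_eq_bot, LinearMap.ker_eq_bot']
    intro u hu0
    by_contra hne
    have hval : (u : K) ≠ 0 := fun h => hne (Subtype.ext h)
    exact hγ1 u u.2 hval (by simpa [LinearMap.comp_apply, hψ] using hu0)
  refine ⟨LinearMap.range (ψ.comp U.subtype), ?_, ?_⟩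
  · rw [LinearMap.finrank_range_of_inj hinj, hUrank]
  · intro a' ha' b' hb' c' hc' d' hd' ha0 hb0 hc0 hd0 hmul
    obtain ⟨⟨a, haU⟩, hua⟩ := LinearMap.mem_range.mp ha'
    obtain ⟨⟨b, hbU⟩, hub⟩ := LinearMap.mem_range.mp hb'
    obtain ⟨⟨c, hcU⟩, huc⟩ := LinearMap.mem_range.mp hc'
    obtain ⟨⟨d, hdU⟩, hud⟩ := LinearMap.mem_range.mp hd'
    have hae : a + a ^ q * γ = a' := hua
    have hbe : b + b ^ q * γ = b' := hub
    have hce : c + c ^ q * γ = c' := huc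
    have hde : d + d ^ q * γ = d' := hud
    have haz : a ≠ 0 := by
      rintro rfl
      apply ha0
      rw [← hae]
      simp [zero_pow hqne]
    have hbz : b ≠ 0 := by
      rintro rfl
      apply hb0
      rw [← hbe]
      simp [zero_pow hqne]
    have hcz : c ≠ 0 := by
      rintro rfl
      apply hc0
      rw [← hce]
      simp [zero_pow hqne]
    have hexp : (a * b - c * d) + (a * b ^ q + a ^ q * b - (c * d ^ q + c ^ q * d)) * γ
        + (a * b - c * d) ^ q * γ ^ 2 = a' * b' - c' * d' := by
      rw [hfrob_sub, mul_pow, mul_pow, ← hae, ← hbe, ← hce, ← hde]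
      ring
    rw [hmul, sub_self] at hexp
    by_cases habcd : a * b = c * d
    · -- main case
      have hyγ : (a * b ^ q + a ^ q * b - (c * d ^ q + c ^ q * d)) * γ = 0 := by
        rw [habcd, sub_self, zero_pow hqne, zero_mul, add_zero, zero_add] at hexp
        exact hexp
      have hy : a * b ^ q + a ^ q * b = c * d ^ q + c ^ q * d :=
        sub_eq_zero.mp ((mul_eq_zero.mp hyγ).resolve_right hγ0)
      have h3 : a ^ q * b ^ q = c ^ q * d ^ q := by
        rw [← mul_pow, habcd, mul_pow]
      have key : (a * c ^ q - a ^ q * c) * (b * c ^ q - b ^ q * c) = 0 := by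
        linear_combination (c ^ q) ^ 2 * habcd - (c * c ^ q) * hy + c ^ 2 * h3
      rcases mul_eq_zero.mp key with hcase | hcase
      · -- c is an F-multiple of a
        have hzfix : (c / a) ^ q = c / a := by
          rw [div_pow, div_eq_div_iff (pow_ne_zero _ haz) haz]
          linear_combination hcase
        obtain ⟨l, hl⟩ := aux_fixed (c / a) hzfix
        have hl0 : l ≠ 0 := by
          rintro rfl
          rw [map_zero] at hl
          rcases div_eq_zero_iff.mp hl.symm with h | h
          · exact hcz h
          · exact haz h
        have hel : algebraMap F K l ≠ 0 := fun h =>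
          hl0 ((algebraMap F K).injective (by rw [h, map_zero]))
        have hc2 : c = algebraMap F K l * a := by
          rw [hl]
          field_simp
        have hbd : b = algebraMap F K l * d := by
          apply mul_left_cancel₀ haz
          rw [habcd, hc2]
          ring
        have hd2 : d = algebraMap F K l⁻¹ * b := by
          rw [hbd, map_inv₀, ← mul_assoc, inv_mul_cancel₀ hel, one_mul]
        have helq : (algebraMap F K l) ^ q = algebraMap F K l := by
          rw [← map_pow, hFq]
        have helq' : (algebraMap F K l⁻¹) ^ q = algebraMap F K l⁻¹ := by
          rw [← map_pow, hFq]
        have hc' : c' = algebraMap F K l * a' := by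
          rw [← hce, ← hae, hc2, mul_pow, helq]
          ring
        have hd' : d' = algebraMap F K l⁻¹ * b' := by
          rw [← hde, ← hbe, hd2, mul_pow, helq']
          ring
        rw [hc', hd', aux_span_smul l hl0, aux_span_smul l⁻¹ (inv_ne_zero hl0)]
      · -- c is an F-multiple of b
        have hzfix : (c / b) ^ q = c / b := by
          rw [div_pow, div_eq_div_iff (pow_ne_zero _ hbz) hbz]
          linear_combination hcase
        obtain ⟨l, hl⟩ := aux_fixed (c / b) hzfix
        have hl0 : l ≠ 0 := by
          rintro rfl
          rw [map_zero] at hl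
          rcases div_eq_zero_iff.mp hl.symm with h | h
          · exact hcz h
          · exact hbz h
        have hel : algebraMap F K l ≠ 0 := fun h =>
          hl0 ((algebraMap F K).injective (by rw [h, map_zero]))
        have hc2 : c = algebraMap F K l * b := by
          rw [hl]
          field_simp
        have had : a = algebraMap F K l * d := by
          apply mul_right_cancel₀ hbz
          rw [habcd, hc2]
          ring
        have hd2 : d = algebraMap F K l⁻¹ * a := by
          rw [had, map_inv₀, ← mul_assoc, inv_mul_cancel₀ hel, one_mul]
        have helq : (algebraMap F K l) ^ q = algebraMap F K l := by
          rw [← map_pow, hFq]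
        have helq' : (algebraMap F K l⁻¹) ^ q = algebraMap F K l⁻¹ := by
          rw [← map_pow, hFq]
        have hc' : c' = algebraMap F K l * b' := by
          rw [← hce, ← hbe, hc2, mul_pow, helq]
          ring
        have hd' : d' = algebraMap F K l⁻¹ * a' := by
          rw [← hde, ← hae, hd2, mul_pow, helq']
          ring
        rw [hc', hd', aux_span_smul l hl0, aux_span_smul l⁻¹ (inv_ne_zero hl0)]
        exact Set.pair_comm _ _
    · exact absurd hexp (hγ2 a b c d haU hbU hcU hdU habcd)
end

section
/- If V is a Sidon space of dimension k in F_{q^n} and q^n − q^k > 2(q^{4k+4} − 1)/(q − 1), then there exists v ∈ F_{q^n} \ V such that V + span{v} is a Sidon space of dimension k+1. -/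
open Polynomial

section Ext
variable {F K : Type*} [Field F] [Field K] [Algebra F K]

lemma sidon_ext (V : Submodule F K) (hV : IsSidon V) (v : K) (hv : v ∉ V)
    (hroot : ∀ a₀ ∈ V, ∀ b₀ ∈ V, ∀ c₀ ∈ V, ∀ d₀ ∈ V, ∀ α β γ δ : F,
      (algebraMap F K α * algebraMap F K β - algebraMap F K γ * algebraMap F K δ) * v ^ 2
        + (a₀ * algebraMap F K β + b₀ * algebraMap F K α
            - c₀ * algebraMap F K δ - d₀ * algebraMap F K γ) * v
        + (a₀ * b₀ - c₀ * d₀) = 0 →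
      algebraMap F K α * algebraMap F K β = algebraMap F K γ * algebraMap F K δ ∧
      a₀ * algebraMap F K β + b₀ * algebraMap F K α
          = c₀ * algebraMap F K δ + d₀ * algebraMap F K γ ∧
      a₀ * b₀ = c₀ * d₀) :
    IsSidon (V ⊔ Submodule.span F {v}) := by
  have hinj : Function.Injective (algebraMap F K) := (algebraMap F K).injective
  have hmapne : ∀ μ : F, μ ≠ 0 → algebraMap F K μ ≠ 0 := by
    intro μ h h2
    exact h (hinj (by simpa using h2))
  have spanEq : ∀ (x y : K) (μ : F), μ ≠ 0 → y = algebraMap F K μ * x →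
      Submodule.span F {y} = Submodule.span F {x} := by
    intro x y μ hμ h
    rw [h, ← Algebra.smul_def]
    exact Submodule.span_singleton_smul_eq (isUnit_iff_ne_zero.2 hμ) x
  have hne : ∀ x ∈ V, ∀ μ : F, μ ≠ 0 → x + algebraMap F K μ * v ≠ 0 := by
    intro x hx μ hμ h
    apply hv
    have hM := hmapne μ hμ
    have : v = (-μ⁻¹) • x := by
      rw [Algebra.smul_def, map_neg, map_inv₀]
      field_simp
      linear_combination h
    rw [this]
    exact V.smul_mem _ hx
  intro a ha b hb c hc d hd ha0 hb0 hc0 hd0 hab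
  obtain ⟨a₀, ha₀, za, hza, rfl⟩ := Submodule.mem_sup.1 ha
  obtain ⟨α, rfl⟩ := Submodule.mem_span_singleton.1 hza
  obtain ⟨b₀, hb₀, zb, hzb, rfl⟩ := Submodule.mem_sup.1 hb
  obtain ⟨β, rfl⟩ := Submodule.mem_span_singleton.1 hzb
  obtain ⟨c₀, hc₀, zc, hzc, rfl⟩ := Submodule.mem_sup.1 hc
  obtain ⟨γ, rfl⟩ := Submodule.mem_span_singleton.1 hzc
  obtain ⟨d₀, hd₀, zd, hzd, rfl⟩ := Submodule.mem_sup.1 hd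
  obtain ⟨δ, rfl⟩ := Submodule.mem_span_singleton.1 hzd
  simp only [Algebra.smul_def] at ha0 hb0 hc0 hd0 hab ⊢
  obtain ⟨e3, e2, e1⟩ :=
    hroot a₀ ha₀ b₀ hb₀ c₀ hc₀ d₀ hd₀ α β γ δ (by linear_combination hab)
  set A := algebraMap F K α with hA
  set B := algebraMap F K β with hB
  set C := algebraMap F K γ with hC
  set D := algebraMap F K δ with hD
  -- abbreviations for nonzero images
  by_cases hα : α = 0 <;> by_cases hβ : β = 0
  · -- α = 0, β = 0 : all four in V or contradiction
    have hA0 : A = 0 := by rw [hA, hα, map_zero]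
    have hB0 : B = 0 := by rw [hB, hβ, map_zero]
    simp only [hA0, hB0, zero_mul, mul_zero, add_zero, zero_add] at e1 e2 e3 ha0 hb0 hc0 hd0 ⊢
    by_cases hγ : γ = 0 <;> by_cases hδ : δ = 0
    · have hC0 : C = 0 := by rw [hC, hγ, map_zero]
      have hD0 : D = 0 := by rw [hD, hδ, map_zero]
      simp only [hC0, hD0, zero_mul, mul_zero, add_zero, zero_add] at hc0 hd0 ⊢
      exact hV a₀ ha₀ b₀ hb₀ c₀ hc₀ d₀ hd₀ ha0 hb0 hc0 hd0 e1
    · -- γ = 0, δ ≠ 0 : c₀ = 0, contradiction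
      have hC0 : C = 0 := by rw [hC, hγ, map_zero]
      have hDne : D ≠ 0 := hmapne δ hδ
      simp only [hC0, mul_zero, add_zero, zero_mul] at e2 e3 hc0 ⊢
      exact absurd (by
        have : c₀ * D = 0 := by linear_combination -e2
        exact (mul_eq_zero.1 this).resolve_right hDne) (by
          intro h; exact hc0 (by rw [h]))
    · -- γ ≠ 0, δ = 0 : d₀ = 0, contradiction
      have hD0 : D = 0 := by rw [hD, hδ, map_zero]
      have hCne : C ≠ 0 := hmapne γ hγ
      simp only [hD0, mul_zero, add_zero, zero_mul] at e2 e3 hd0 ⊢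
      exact absurd (by
        have : d₀ * C = 0 := by linear_combination -e2
        exact (mul_eq_zero.1 this).resolve_right hCne) (by
          intro h; exact hd0 (by rw [h]))
    · -- γ ≠ 0, δ ≠ 0 : e3 contradiction
      exact absurd e3.symm (mul_ne_zero (hmapne γ hγ) (hmapne δ hδ))
  · -- α = 0, β ≠ 0
    have hA0 : A = 0 := by rw [hA, hα, map_zero]
    have hBne : B ≠ 0 := hmapne β hβ
    simp only [hA0, zero_mul, mul_zero, add_zero, zero_add] at e1 e2 e3 ha0 ⊢
    by_cases hγ : γ = 0 <;> by_cases hδ : δ = 0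
    · -- a₀ = 0 contradiction
      have hC0 : C = 0 := by rw [hC, hγ, map_zero]
      have hD0 : D = 0 := by rw [hD, hδ, map_zero]
      simp only [hC0, hD0, zero_mul, mul_zero, add_zero, zero_add] at e2
      exact absurd ((mul_eq_zero.1 e2).resolve_right hBne) ha0
    · -- γ = 0, δ ≠ 0 : C = 0; span a = span c, span d = span b
      have hC0 : C = 0 := by rw [hC, hγ, map_zero]
      have hDne : D ≠ 0 := hmapne δ hδ
      simp only [hC0, zero_mul, mul_zero, add_zero, zero_add] at e1 e2 e3 hc0 ⊢
      have hc₀0 : c₀ ≠ 0 := hc0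
      have hSa : Submodule.span F {a₀} = Submodule.span F {c₀} := by
        refine spanEq _ _ (δ * β⁻¹) (mul_ne_zero hδ (inv_ne_zero hβ)) ?_
        rw [map_mul, map_inv₀, ← hD, ← hB]
        field_simp
        linear_combination e2
      have hkey : d₀ * B = b₀ * D := by
        have := mul_right_cancel₀ hc₀0 (show d₀ * B * c₀ = b₀ * D * c₀ by
          linear_combination b₀ * e2 - B * e1)
        exact this
      have hSd : Submodule.span F {d₀ + D * v} = Submodule.span F {b₀ + B * v} := by
        refine spanEq _ _ (δ * β⁻¹) (mul_ne_zero hδ (inv_ne_zero hβ)) ?_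
        rw [map_mul, map_inv₀, ← hD, ← hB]
        field_simp
        linear_combination hkey
      rw [hSa, hSd]
    · -- γ ≠ 0, δ = 0 : D = 0; span a = span d, span c = span b
      have hD0 : D = 0 := by rw [hD, hδ, map_zero]
      have hCne : C ≠ 0 := hmapne γ hγ
      simp only [hD0, zero_mul, mul_zero, add_zero, zero_add] at e1 e2 e3 hd0 ⊢
      have hd₀0 : d₀ ≠ 0 := hd0
      have hSa : Submodule.span F {a₀} = Submodule.span F {d₀} := by
        refine spanEq _ _ (γ * β⁻¹) (mul_ne_zero hγ (inv_ne_zero hβ)) ?_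
        rw [map_mul, map_inv₀, ← hC, ← hB]
        field_simp
        linear_combination e2
      have hkey : c₀ * B = b₀ * C := by
        exact mul_right_cancel₀ hd₀0 (show c₀ * B * d₀ = b₀ * C * d₀ by
          linear_combination b₀ * e2 - B * e1)
      have hSc : Submodule.span F {c₀ + C * v} = Submodule.span F {b₀ + B * v} := by
        refine spanEq _ _ (γ * β⁻¹) (mul_ne_zero hγ (inv_ne_zero hβ)) ?_
        rw [map_mul, map_inv₀, ← hC, ← hB]
        field_simp
        linear_combination hkey
      rw [hSa, hSc, Set.pair_comm]
    · exact absurd e3.symm (mul_ne_zero (hmapne γ hγ) (hmapne δ hδ))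
  · -- α ≠ 0, β = 0
    have hB0 : B = 0 := by rw [hB, hβ, map_zero]
    have hAne : A ≠ 0 := hmapne α hα
    simp only [hB0, zero_mul, mul_zero, add_zero, zero_add] at e1 e2 e3 hb0 ⊢
    by_cases hγ : γ = 0 <;> by_cases hδ : δ = 0
    · have hC0 : C = 0 := by rw [hC, hγ, map_zero]
      have hD0 : D = 0 := by rw [hD, hδ, map_zero]
      simp only [hC0, hD0, zero_mul, mul_zero, add_zero, zero_add] at e2
      exact absurd ((mul_eq_zero.1 e2).resolve_right hAne) hb0
    · -- γ = 0, δ ≠ 0 : C = 0; span b = span c, span d = span a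
      have hC0 : C = 0 := by rw [hC, hγ, map_zero]
      have hDne : D ≠ 0 := hmapne δ hδ
      simp only [hC0, zero_mul, mul_zero, add_zero, zero_add] at e1 e2 e3 hc0 ⊢
      have hc₀0 : c₀ ≠ 0 := hc0
      have hSb : Submodule.span F {b₀} = Submodule.span F {c₀} := by
        refine spanEq _ _ (δ * α⁻¹) (mul_ne_zero hδ (inv_ne_zero hα)) ?_
        rw [map_mul, map_inv₀, ← hD, ← hA]
        field_simp
        linear_combination e2
      have hkey : d₀ * A = a₀ * D := by
        exact mul_right_cancel₀ hc₀0 (show d₀ * A * c₀ = a₀ * D * c₀ by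
          linear_combination a₀ * e2 - A * e1)
      have hSd : Submodule.span F {d₀ + D * v} = Submodule.span F {a₀ + A * v} := by
        refine spanEq _ _ (δ * α⁻¹) (mul_ne_zero hδ (inv_ne_zero hα)) ?_
        rw [map_mul, map_inv₀, ← hD, ← hA]
        field_simp
        linear_combination hkey
      rw [hSb, hSd, Set.pair_comm]
    · -- γ ≠ 0, δ = 0 : D = 0; span b = span d, span c = span a
      have hD0 : D = 0 := by rw [hD, hδ, map_zero]
      have hCne : C ≠ 0 := hmapne γ hγ
      simp only [hD0, zero_mul, mul_zero, add_zero, zero_add] at e1 e2 e3 hd0 ⊢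
      have hd₀0 : d₀ ≠ 0 := hd0
      have hSb : Submodule.span F {b₀} = Submodule.span F {d₀} := by
        refine spanEq _ _ (γ * α⁻¹) (mul_ne_zero hγ (inv_ne_zero hα)) ?_
        rw [map_mul, map_inv₀, ← hC, ← hA]
        field_simp
        linear_combination e2
      have hkey : c₀ * A = a₀ * C := by
        exact mul_right_cancel₀ hd₀0 (show c₀ * A * d₀ = a₀ * C * d₀ by
          linear_combination a₀ * e2 - A * e1)
      have hSc : Submodule.span F {c₀ + C * v} = Submodule.span F {a₀ + A * v} := by
        refine spanEq _ _ (γ * α⁻¹) (mul_ne_zero hγ (inv_ne_zero hα)) ?_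
        rw [map_mul, map_inv₀, ← hC, ← hA]
        field_simp
        linear_combination hkey
      rw [hSb, hSc]
    · exact absurd e3.symm (mul_ne_zero (hmapne γ hγ) (hmapne δ hδ))
  · -- main case : α ≠ 0, β ≠ 0
    have hAne : A ≠ 0 := hmapne α hα
    have hBne : B ≠ 0 := hmapne β hβ
    have hCD : C * D ≠ 0 := by rw [← e3]; exact mul_ne_zero hAne hBne
    have hCne : C ≠ 0 := fun h => hCD (by rw [h, zero_mul])
    have hDne : D ≠ 0 := fun h => hCD (by rw [h, mul_zero])
    have hγ : γ ≠ 0 := fun h => hCne (by rw [hC, h, map_zero])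
    have hδ : δ ≠ 0 := fun h => hDne (by rw [hD, h, map_zero])
    have key0 : (C * a₀ - A * c₀) * (D * a₀ - A * d₀) = 0 := by
      linear_combination (-(A^2)) * e1 + (a₀ * A) * e2 + (-(a₀^2)) * e3
    rcases mul_eq_zero.1 key0 with h | h
    · have hSc : Submodule.span F {c₀ + C * v} = Submodule.span F {a₀ + A * v} := by
        refine spanEq _ _ (γ * α⁻¹) (mul_ne_zero hγ (inv_ne_zero hα)) ?_
        rw [map_mul, map_inv₀, ← hC, ← hA]
        field_simp
        linear_combination -h
      have hkey2 : A * (A * b₀ - C * d₀) = 0 := by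
        linear_combination A * e2 - a₀ * e3 - D * h
      have hb2 : A * b₀ = C * d₀ := by
        have := (mul_eq_zero.1 hkey2).resolve_left hAne
        linear_combination this
      have hkey3 : A * (D * b₀ - B * d₀) = 0 := by
        linear_combination D * hb2 - d₀ * e3
      have hbd : D * b₀ = B * d₀ := by
        have := (mul_eq_zero.1 hkey3).resolve_left hAne
        linear_combination this
      have hSd : Submodule.span F {d₀ + D * v} = Submodule.span F {b₀ + B * v} := by
        refine spanEq _ _ (δ * β⁻¹) (mul_ne_zero hδ (inv_ne_zero hβ)) ?_
        rw [map_mul, map_inv₀, ← hD, ← hB]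
        field_simp
        linear_combination -hbd
      rw [hSc, hSd]
    · have hSd : Submodule.span F {d₀ + D * v} = Submodule.span F {a₀ + A * v} := by
        refine spanEq _ _ (δ * α⁻¹) (mul_ne_zero hδ (inv_ne_zero hα)) ?_
        rw [map_mul, map_inv₀, ← hD, ← hA]
        field_simp
        linear_combination -h
      have hkey2 : A * (A * b₀ - D * c₀) = 0 := by
        linear_combination A * e2 - a₀ * e3 - C * h
      have hb2 : A * b₀ = D * c₀ := by
        have := (mul_eq_zero.1 hkey2).resolve_left hAne
        linear_combination this
      have hkey3 : A * (C * b₀ - B * c₀) = 0 := by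
        linear_combination C * hb2 - c₀ * e3
      have hbc : C * b₀ = B * c₀ := by
        have := (mul_eq_zero.1 hkey3).resolve_left hAne
        linear_combination this
      have hSc : Submodule.span F {c₀ + C * v} = Submodule.span F {b₀ + B * v} := by
        refine spanEq _ _ (γ * β⁻¹) (mul_ne_zero hγ (inv_ne_zero hβ)) ?_
        rw [map_mul, map_inv₀, ← hC, ← hB]
        field_simp
        linear_combination -hbc
      rw [hSc, hSd, Set.pair_comm]


end Ext

section Count
variable {F K : Type*} [Field F] [Field K] [Algebra F K]

open Polynomial

/-- The quadratic polynomial attached to a tuple `(a, b, c, d, α, β, γ, δ)`. -/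
noncomputable def sidonPoly (t : K × K × K × K × F × F × F × F) : Polynomial K :=
  C (algebraMap F K t.2.2.2.2.1 * algebraMap F K t.2.2.2.2.2.1
      - algebraMap F K t.2.2.2.2.2.2.1 * algebraMap F K t.2.2.2.2.2.2.2) * X ^ 2
    + C (t.1 * algebraMap F K t.2.2.2.2.2.1 + t.2.1 * algebraMap F K t.2.2.2.2.1
      - t.2.2.1 * algebraMap F K t.2.2.2.2.2.2.2 - t.2.2.2.1 * algebraMap F K t.2.2.2.2.2.2.1) * X
    + C (t.1 * t.2.1 - t.2.2.1 * t.2.2.2.1)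

lemma sidonPoly_natDegree_le (t : K × K × K × K × F × F × F × F) :
    (sidonPoly t).natDegree ≤ 2 :=
  natDegree_quadratic_le

lemma sidonPoly_smul (l : F) (t : K × K × K × K × F × F × F × F) :
    sidonPoly (l • t) = C ((algebraMap F K l) ^ 2) * sidonPoly t := by
  obtain ⟨a, b, c, d, α, β, γ, δ⟩ := t
  simp only [Prod.smul_mk, smul_eq_mul]
  simp only [sidonPoly, Algebra.smul_def, map_mul, map_add, map_sub, map_pow]
  ring

lemma sidonPoly_coeffs (t : K × K × K × K × F × F × F × F) (h : sidonPoly t = 0) :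
    algebraMap F K t.2.2.2.2.1 * algebraMap F K t.2.2.2.2.2.1
        = algebraMap F K t.2.2.2.2.2.2.1 * algebraMap F K t.2.2.2.2.2.2.2 ∧
      t.1 * algebraMap F K t.2.2.2.2.2.1 + t.2.1 * algebraMap F K t.2.2.2.2.1
        = t.2.2.1 * algebraMap F K t.2.2.2.2.2.2.2 + t.2.2.2.1 * algebraMap F K t.2.2.2.2.2.2.1 ∧
      t.1 * t.2.1 = t.2.2.1 * t.2.2.2.1 := by
  have h2 := congrArg (fun p => Polynomial.coeff p 2) h
  have h1 := congrArg (fun p => Polynomial.coeff p 1) h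
  have h0 := congrArg (fun p => Polynomial.coeff p 0) h
  simp only [sidonPoly, coeff_add, coeff_C_mul, coeff_X_pow, coeff_X, coeff_C, coeff_zero,
    mul_one, mul_zero, add_zero, zero_add, if_true, if_false] at h2 h1 h0
  norm_num at h2 h1 h0
  exact ⟨by linear_combination h2, by linear_combination h1, by linear_combination h0⟩

lemma sidonPoly_eval (t : K × K × K × K × F × F × F × F) (v : K) :
    (sidonPoly t).eval v
      = (algebraMap F K t.2.2.2.2.1 * algebraMap F K t.2.2.2.2.2.1
          - algebraMap F K t.2.2.2.2.2.2.1 * algebraMap F K t.2.2.2.2.2.2.2) * v ^ 2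
        + (t.1 * algebraMap F K t.2.2.2.2.2.1 + t.2.1 * algebraMap F K t.2.2.2.2.1
          - t.2.2.1 * algebraMap F K t.2.2.2.2.2.2.2 - t.2.2.2.1 * algebraMap F K t.2.2.2.2.2.2.1) * v
        + (t.1 * t.2.1 - t.2.2.1 * t.2.2.2.1) := by
  simp [sidonPoly]

end Count

set_option synthInstance.maxHeartbeats 1000000 in
theorem stmt8 {F K : Type*} [Field F] [Fintype F] [Field K] [Fintype K] [Algebra F K]
    (q n k : ℕ) (hq : q = Fintype.card F) (hn : Fintype.card K = q ^ n)
    (V : Submodule F K) (hk : Module.finrank F V = k) (hV : IsSidon V)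
    (hbig : (q - 1) * (q ^ n - q ^ k) > 2 * (q ^ (4 * k + 4) - 1)) :
    ∃ v : K, v ∉ V ∧ IsSidon (V ⊔ Submodule.span F {v}) ∧
      Module.finrank F ↥(V ⊔ Submodule.span F {v}) = k + 1 := by
  classical
  have hq2 : 2 ≤ q := by rw [hq]; exact Fintype.one_lt_card
  have hcardV : Fintype.card V = q ^ k := by
    rw [hq, ← hk]; exact Module.card_eq_pow_finrank
  -- the finset of elements of V
  set Vf : Finset K := Set.toFinset (V : Set K) with hVf
  have hVfcard : Vf.card = q ^ k := by
    rw [hVf, Set.toFinset_card, ← hcardV]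
    exact Fintype.card_congr (Equiv.refl _)
  have hVfmem : ∀ x : K, x ∈ Vf ↔ x ∈ V := by
    intro x; rw [hVf, Set.mem_toFinset]; rfl
  -- the finset of tuples
  set S : Finset (K × K × K × K × F × F × F × F) :=
    (Vf ×ˢ Vf ×ˢ Vf ×ˢ Vf ×ˢ (Finset.univ : Finset F) ×ˢ (Finset.univ : Finset F)
        ×ˢ (Finset.univ : Finset F) ×ˢ (Finset.univ : Finset F)).erase 0 with hS
  have hSmem : ∀ t : K × K × K × K × F × F × F × F,
      t ∈ S ↔ t ≠ 0 ∧ t.1 ∈ V ∧ t.2.1 ∈ V ∧ t.2.2.1 ∈ V ∧ t.2.2.2.1 ∈ V := by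
    intro t
    rw [hS, Finset.mem_erase]
    simp only [Finset.mem_product, Finset.mem_univ, and_true, hVfmem]
  have hScard : S.card = q ^ (4 * k + 4) - 1 := by
    rw [hS, Finset.card_erase_of_mem]
    · simp only [Finset.card_product, Finset.card_univ, hVfcard, ← hq]
      congr 1
      ring
    · simp only [Finset.mem_product, Finset.mem_univ, and_true, hVfmem, Prod.fst_zero,
        Prod.snd_zero]
      exact ⟨V.zero_mem, V.zero_mem, V.zero_mem, V.zero_mem⟩
  -- the bad set
  set B : Finset K := S.biUnion (fun t => (sidonPoly t).roots.toFinset) with hB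
  set I : Finset (Finset K) := S.image (fun t => (sidonPoly t).roots.toFinset) with hI
  have hBI : B.card ≤ 2 * I.card := by
    have : B = I.biUnion id := by
      rw [hB, hI, Finset.image_biUnion]
      rfl
    rw [this]
    calc (I.biUnion id).card ≤ ∑ s ∈ I, (id s).card := Finset.card_biUnion_le
      _ ≤ ∑ _s ∈ I, 2 := by
          refine Finset.sum_le_sum ?_
          intro s hs
          obtain ⟨t, _, rfl⟩ := Finset.mem_image.1 hs
          exact le_trans (Multiset.toFinset_card_le _)
            (le_trans (Polynomial.card_roots' _) (sidonPoly_natDegree_le t))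
      _ = 2 * I.card := by rw [Finset.sum_const, smul_eq_mul, mul_comm]
  have hSI : (q - 1) * I.card ≤ S.card := by
    have hfib : ∀ s ∈ I, q - 1 ≤
        (S.filter (fun t' => (sidonPoly t').roots.toFinset = s)).card := by
      intro s hs
      obtain ⟨t, htS, rfl⟩ := Finset.mem_image.1 hs
      have ht0 : t ≠ 0 := ((hSmem t).1 htS).1
      -- the q - 1 scalar multiples of t are in the fiber
      have hsub : (Finset.univ.erase (0:F)).image (fun l => l • t) ⊆
          S.filter (fun t' => (sidonPoly t').roots.toFinset = (sidonPoly t).roots.toFinset) := by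
        intro x hx
        obtain ⟨l, hl, rfl⟩ := Finset.mem_image.1 hx
        have hl0 : l ≠ 0 := (Finset.mem_erase.1 hl).1
        have hlK : (algebraMap F K l) ≠ 0 := fun h =>
          hl0 ((algebraMap F K).injective (by simpa using h))
        refine Finset.mem_filter.2 ⟨?_, ?_⟩
        · obtain ⟨_, h1, h2, h3, h4⟩ := (hSmem t).1 htS
          refine (hSmem _).2 ⟨?_, V.smul_mem l h1, V.smul_mem l h2, V.smul_mem l h3,
            V.smul_mem l h4⟩
          intro h
          apply ht0
          have := congrArg (fun y => l⁻¹ • y) h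
          simpa [smul_smul, inv_mul_cancel₀ hl0] using this
        · rw [sidonPoly_smul, Polynomial.roots_C_mul _ (pow_ne_zero 2 hlK)]
      have hinj : Set.InjOn (fun l : F => l • t) (Finset.univ.erase (0:F)) := by
        intro x _ y _ h
        exact smul_left_injective F ht0 h
      have := Finset.card_le_card hsub
      rw [Finset.card_image_of_injOn hinj, Finset.card_erase_of_mem (Finset.mem_univ _),
        Finset.card_univ, ← hq] at this
      exact this
    calc (q - 1) * I.card = ∑ _s ∈ I, (q - 1) := by
          rw [Finset.sum_const, smul_eq_mul, mul_comm]
      _ ≤ ∑ s ∈ I, (S.filter (fun t' => (sidonPoly t').roots.toFinset = s)).card :=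
          Finset.sum_le_sum hfib
      _ = S.card := (Finset.card_eq_sum_card_fiberwise
          (fun t ht => Finset.mem_image_of_mem (fun t => (sidonPoly t).roots.toFinset) ht)).symm
  -- counting
  have hpos : 0 < q ^ n - q ^ k := by
    rcases Nat.eq_zero_or_pos (q ^ n - q ^ k) with h | h
    · rw [h, mul_zero] at hbig; omega
    · exact h
  have hBcard : B.card < q ^ n - q ^ k := by
    have h1 : (q - 1) * B.card ≤ 2 * (q ^ (4 * k + 4) - 1) := by
      calc (q - 1) * B.card ≤ (q - 1) * (2 * I.card) := Nat.mul_le_mul_left _ hBI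
        _ = 2 * ((q - 1) * I.card) := by ring
        _ ≤ 2 * S.card := Nat.mul_le_mul_left _ hSI
        _ = 2 * (q ^ (4 * k + 4) - 1) := by rw [hScard]
    have h2 : (q - 1) * B.card < (q - 1) * (q ^ n - q ^ k) := lt_of_le_of_lt h1 hbig
    exact Nat.lt_of_mul_lt_mul_left h2
  -- choose v outside V and B
  have hex : ∃ v : K, v ∉ Vf ∪ B := by
    by_contra h
    push_neg at h
    have hsub : (Finset.univ : Finset K) ⊆ Vf ∪ B := fun x _ => h x
    have hle := Finset.card_le_card hsub
    rw [Finset.card_univ, hn] at hle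
    have := Finset.card_union_le Vf B
    omega
  obtain ⟨v, hvmem⟩ := hex
  have hvV : v ∉ V := fun h => hvmem (Finset.mem_union_left _ ((hVfmem v).2 h))
  have hvB : v ∉ B := fun h => hvmem (Finset.mem_union_right _ h)
  refine ⟨v, hvV, ?_, ?_⟩
  · -- Sidon
    refine sidon_ext V hV v hvV ?_
    intro a₀ ha₀ b₀ hb₀ c₀ hc₀ d₀ hd₀ α β γ δ heq
    set t : K × K × K × K × F × F × F × F := (a₀, b₀, c₀, d₀, α, β, γ, δ) with ht
    have hP0 : sidonPoly t = 0 := by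
      by_contra hP
      apply hvB
      rw [hB]
      refine Finset.mem_biUnion.2 ⟨t, ?_, ?_⟩
      · refine (hSmem t).2 ⟨?_, ha₀, hb₀, hc₀, hd₀⟩
        intro h0
        apply hP
        rw [h0]
        simp [sidonPoly]
      · rw [Multiset.mem_toFinset]
        refine (Polynomial.mem_roots hP).2 ?_
        rw [Polynomial.IsRoot, sidonPoly_eval]
        linear_combination heq
    exact sidonPoly_coeffs t hP0
  · -- finrank
    have hv0 : v ≠ 0 := fun h => hvV (h ▸ V.zero_mem)
    have hinf : V ⊓ Submodule.span F {v} = ⊥ := by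
      rw [eq_bot_iff]
      intro x hx
      obtain ⟨hxV, hxs⟩ := Submodule.mem_inf.1 hx
      obtain ⟨μ, rfl⟩ := Submodule.mem_span_singleton.1 hxs
      rcases eq_or_ne μ 0 with h | h
      · simp [h]
      · exact absurd (by
          have : v = μ⁻¹ • (μ • v) := by rw [smul_smul, inv_mul_cancel₀ h, one_smul]
          rw [this]
          exact V.smul_mem _ hxV) hvV
    have hfr := Submodule.finrank_sup_add_finrank_inf_eq V (Submodule.span F {v})
    rw [hinf, finrank_bot, hk, finrank_span_singleton hv0] at hfr
    omega
end

section
/- Let S = {n_1, …, n_k} ⊆ [m] be a Sidon set of integers, let n > 2m, and let γ ∈ F_{q^n} be an element not contained in any proper subfield of F_{q^n}. Then V = span_{F_q}{γ^{n_1}, …, γ^{n_k}} is a k-dimensional Sidon space with dim(V²) = k(k+1)/2. -/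
open Polynomial

theorem sidon_core {F : Type*} [Field F] {k : ℕ} (f g h l : Fin k → F)
    (hh : ∃ i, h i ≠ 0)
    (Hrel : ∀ i j : Fin k, (h i * l j = f i * g j ∧ h j * l i = f j * g i) ∨
        (h i * l j = f j * g i ∧ h j * l i = f i * g j))
    {j₀ : Fin k} (hlj0 : l j₀ ≠ 0) :
    (∃ c : F, ∀ i, h i = c * f i) ∨ (∃ c : F, ∀ i, h i = c * g i) := by
  have D : h j₀ * l j₀ = f j₀ * g j₀ := by
    rcases Hrel j₀ j₀ with ⟨e, _⟩ | ⟨e, _⟩ <;> exact e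
  by_cases hj0 : h j₀ = 0
  · -- then f j₀ * g j₀ = 0
    have hfg : f j₀ * g j₀ = 0 := by rw [← D, hj0, zero_mul]
    by_cases hf0 : f j₀ = 0
    · by_cases hg0 : g j₀ = 0
      · exfalso
        obtain ⟨i, hi⟩ := hh
        rcases Hrel i j₀ with ⟨e1, _⟩ | ⟨e1, _⟩
        · rw [hg0, mul_zero] at e1
          exact hi ((mul_eq_zero.mp e1).resolve_right hlj0)
        · rw [hf0, zero_mul] at e1
          exact hi ((mul_eq_zero.mp e1).resolve_right hlj0)
      · -- f j₀ = 0, g j₀ ≠ 0 : h = (g j₀ / l j₀) • f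
        left
        refine ⟨g j₀ / l j₀, fun i => ?_⟩
        rcases Hrel i j₀ with ⟨e1, _⟩ | ⟨e1, e2⟩
        · field_simp
          linear_combination e1
        · rw [hf0, zero_mul] at e1
          have hi0 : h i = 0 := by
            rcases mul_eq_zero.mp e1 with h' | h'
            · exact h'
            · exact absurd h' hlj0
          have hfi : f i = 0 := by
            rw [hj0, zero_mul] at e2
            rcases mul_eq_zero.mp e2.symm with h' | h'
            · exact h'
            · exact absurd h' hg0
          rw [hi0, hfi, mul_zero]
    · -- f j₀ ≠ 0, g j₀ = 0 : h = (f j₀ / l j₀) • g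
      have hg0 : g j₀ = 0 := by
        rcases mul_eq_zero.mp hfg with h' | h'
        · exact absurd h' hf0
        · exact h'
      right
      refine ⟨f j₀ / l j₀, fun i => ?_⟩
      rcases Hrel i j₀ with ⟨e1, e2⟩ | ⟨e1, _⟩
      · rw [hg0, mul_zero] at e1
        have hi0 : h i = 0 := by
          rcases mul_eq_zero.mp e1 with h' | h'
          · exact h'
          · exact absurd h' hlj0
        have hgi : g i = 0 := by
          rw [hj0, zero_mul] at e2
          rcases mul_eq_zero.mp e2.symm with h' | h'
          · exact absurd h' hf0
          · exact h'
        rw [hi0, hgi, mul_zero]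
      · field_simp
        linear_combination e1
  · -- Case I : h j₀ ≠ 0
    have hfj0 : f j₀ ≠ 0 := fun hc => hj0 (by
      have : h j₀ * l j₀ = 0 := by rw [D, hc, zero_mul]
      rcases mul_eq_zero.mp this with h' | h'
      · exact h'
      · exact absurd h' hlj0)
    have hgj0 : g j₀ ≠ 0 := fun hc => hj0 (by
      have : h j₀ * l j₀ = 0 := by rw [D, hc, mul_zero]
      rcases mul_eq_zero.mp this with h' | h'
      · exact h'
      · exact absurd h' hlj0)
    by_cases H1 : ∀ i, h i = (g j₀ / l j₀) * f i
    · exact Or.inl ⟨_, H1⟩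
    by_cases H2 : ∀ i, h i = (f j₀ / l j₀) * g i
    · exact Or.inr ⟨_, H2⟩
    exfalso
    push_neg at H1 H2
    obtain ⟨i₁, hi₁⟩ := H1
    obtain ⟨i₂, hi₂⟩ := H2
    have NE1 : h i₁ * l j₀ ≠ f i₁ * g j₀ := fun hc => hi₁ (by
      field_simp
      linear_combination hc)
    have NE2 : h i₂ * l j₀ ≠ f j₀ * g i₂ := fun hc => hi₂ (by
      field_simp
      linear_combination hc)
    obtain ⟨E1, E2⟩ : h i₁ * l j₀ = f j₀ * g i₁ ∧ h j₀ * l i₁ = f i₁ * g j₀ := by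
      rcases Hrel i₁ j₀ with ⟨e1, _⟩ | he
      · exact absurd e1 NE1
      · exact he
    obtain ⟨E3, E4⟩ : h i₂ * l j₀ = f i₂ * g j₀ ∧ h j₀ * l i₂ = f j₀ * g i₂ := by
      rcases Hrel i₂ j₀ with he | ⟨e1, _⟩
      · exact he
      · exact absurd e1 NE2
    have key : f j₀ * g i₁ - f i₁ * g j₀ ≠ 0 := sub_ne_zero.mpr (E1 ▸ NE1)
    have key2 : f j₀ * g i₂ - f i₂ * g j₀ ≠ 0 :=
      sub_ne_zero.mpr fun hc => NE2 (by rw [E3]; linear_combination -hc)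
    rcases Hrel i₁ i₂ with ⟨RA1, RA2⟩ | ⟨RB1, RB2⟩
    · have e : f j₀ * (g i₂ * (f j₀ * g i₁ - f i₁ * g j₀)) = 0 := by
        linear_combination (-(h j₀ * l i₂)) * E1 - (f j₀ * g i₁) * E4 + (h j₀ * l j₀) * RA1 +
          (f i₁ * g i₂) * D
      have hg2 : g i₂ = 0 := by
        rcases mul_eq_zero.mp e with h' | h'
        · exact absurd h' hfj0
        · rcases mul_eq_zero.mp h' with h'' | h''
          · exact h''
          · exact absurd h'' key
      have e2 : g j₀ * (f i₂ * (f i₁ * g j₀ - f j₀ * g i₁)) = 0 := by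
        linear_combination (-(h j₀ * l i₁)) * E3 - (f i₂ * g j₀) * E2 + (h j₀ * l j₀) * RA2 +
          (f i₂ * g i₁) * D
      have hf2 : f i₂ = 0 := by
        rcases mul_eq_zero.mp e2 with h' | h'
        · exact absurd h' hgj0
        · rcases mul_eq_zero.mp h' with h'' | h''
          · exact h''
          · exact absurd h'' (fun hc => key (by linear_combination -hc))
      exact NE2 (by rw [E3, hf2, hg2]; ring)
    · have e : f j₀ * (g i₁ * (f j₀ * g i₂ - f i₂ * g j₀)) = 0 := by
        linear_combination (-(h j₀ * l i₂)) * E1 - (f j₀ * g i₁) * E4 + (h j₀ * l j₀) * RB1 +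
          (f i₂ * g i₁) * D
      have hg1 : g i₁ = 0 := by
        rcases mul_eq_zero.mp e with h' | h'
        · exact absurd h' hfj0
        · rcases mul_eq_zero.mp h' with h'' | h''
          · exact h''
          · exact absurd h'' key2
      have e2 : g j₀ * (f i₁ * (f i₂ * g j₀ - f j₀ * g i₂)) = 0 := by
        linear_combination (-(h j₀ * l i₁)) * E3 - (f i₂ * g j₀) * E2 + (h j₀ * l j₀) * RB2 +
          (f i₁ * g i₂) * D
      have hf1 : f i₁ = 0 := by
        rcases mul_eq_zero.mp e2 with h' | h'
        · exact absurd h' hgj0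
        · rcases mul_eq_zero.mp h' with h'' | h''
          · exact h''
          · exact absurd h'' (fun hc => key2 (by linear_combination -hc))
      exact NE1 (by rw [E1, hf1, hg1]; ring)

theorem sidon_rel {F : Type*} [Field F] {k : ℕ} (f g h l : Fin k → F)
    (Hoff : ∀ i j : Fin k, i ≠ j → f i * g j + f j * g i = h i * l j + h j * l i)
    (Hdiag : ∀ i, f i * g i = h i * l i) (i j : Fin k) :
    (h i * l j = f i * g j ∧ h j * l i = f j * g i) ∨
      (h i * l j = f j * g i ∧ h j * l i = f i * g j) := by
  by_cases hij : i = j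
  · subst hij; left; exact ⟨(Hdiag i).symm, (Hdiag i).symm⟩
  · have hsum := Hoff i j hij
    have hprod : (h i * l j) * (h j * l i) = (f i * g j) * (f j * g i) := by
      calc (h i * l j) * (h j * l i) = (h i * l i) * (h j * l j) := by ring
        _ = (f i * g i) * (f j * g j) := by rw [← Hdiag i, ← Hdiag j]
        _ = (f i * g j) * (f j * g i) := by ring
    have key : (h i * l j - f i * g j) * (h i * l j - f j * g i) = 0 := by
      linear_combination (-(h i * l j)) * hsum - hprod
    rcases mul_eq_zero.mp key with h' | h'
    · have e1 : h i * l j = f i * g j := sub_eq_zero.mp h'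
      exact Or.inl ⟨e1, by linear_combination -hsum - e1⟩
    · have e1 : h i * l j = f j * g i := sub_eq_zero.mp h'
      exact Or.inr ⟨e1, by linear_combination -hsum - e1⟩

theorem powers_li {F K : Type*} [Field F] [Fintype F] [Field K] [Fintype K] [Algebra F K]
    (q n : ℕ) (hq : q = Fintype.card F) (hcard : Fintype.card K = q ^ n)
    (γ : K) (hγ : ∀ E : Subfield K, γ ∈ E → E = ⊤) :
    LinearIndependent F fun i : Fin n => γ ^ (i : ℕ) := by
  have hfd : FiniteDimensional F K := inferInstance
  have h1 : Fintype.card K = Fintype.card F ^ Module.finrank F K := Module.card_eq_pow_finrank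
  have hKn : Module.finrank F K = n := by
    rw [hcard, hq] at h1
    exact (Nat.pow_right_injective Fintype.one_lt_card h1).symm
  have htop : IntermediateField.adjoin F {γ} = ⊤ := by
    have h2 := hγ (IntermediateField.adjoin F {γ}).toSubfield
      (IntermediateField.mem_adjoin_simple_self F γ)
    ext x
    simp only [IntermediateField.mem_top, iff_true]
    have : x ∈ ((IntermediateField.adjoin F {γ}).toSubfield : Set K) := by
      rw [h2]; trivial
    exact this
  have hint : IsIntegral F γ := IsIntegral.of_finite F γ
  have hdeg : (minpoly F γ).natDegree = n := by
    rw [← IntermediateField.adjoin.finrank hint, htop, IntermediateField.finrank_top', hKn]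
  have := linearIndependent_pow (K := F) γ
  rwa [hdeg] at this

theorem regroup_sum {F K : Type*} [Field F] [Field K] [Algebra F K] {ι : Type*} [Fintype ι]
    [DecidableEq ι] (n : ℕ) (γ : K) (w : ι → F) (e : ι → ℕ) (hb : ∀ p, e p < n) :
    ∑ p, w p • γ ^ e p
      = ∑ t : Fin n,
          (∑ p ∈ Finset.univ.filter fun p => (⟨e p, hb p⟩ : Fin n) = t, w p) • γ ^ (t : ℕ) := by
  rw [eq_comm]
  calc ∑ t : Fin n, (∑ p ∈ Finset.univ.filter fun p => (⟨e p, hb p⟩ : Fin n) = t, w p) • γ ^ (t:ℕ)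
      = ∑ t : Fin n, ∑ p ∈ Finset.univ.filter fun p => (⟨e p, hb p⟩ : Fin n) = t,
          w p • γ ^ (e p) := by
        refine Finset.sum_congr rfl fun t _ => ?_
        rw [Finset.sum_smul]
        refine Finset.sum_congr rfl fun p hp => ?_
        have := (Finset.mem_filter.mp hp).2
        rw [← this]
    _ = ∑ p, w p • γ ^ e p := by
        exact Finset.sum_fiberwise_of_maps_to (fun p _ => Finset.mem_univ _) _

theorem stmt10 {F K : Type*} [Field F] [Fintype F] [Field K] [Fintype K] [Algebra F K]
    (q n m k : ℕ) (hq : q = Fintype.card F) (hcard : Fintype.card K = q ^ n)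
    (N : Fin k → ℕ) (hNinj : Function.Injective N)
    (hrange : ∀ i, 1 ≤ N i ∧ N i ≤ m)
    (hSidon : ∀ i j s t : Fin k, N i + N j = N s + N t →
      ({N i, N j} : Set ℕ) = {N s, N t})
    (hnm : 2 * m < n)
    (γ : K) (hγ : ∀ E : Subfield K, γ ∈ E → E = ⊤) :
    Module.finrank F ↥(Submodule.span F (Set.range fun i => γ ^ N i)) = k ∧
    IsSidon (Submodule.span F (Set.range fun i => γ ^ N i)) ∧
    Module.finrank F ↥(Submodule.span F (Set.range fun i => γ ^ N i) *
      Submodule.span F (Set.range fun i => γ ^ N i)) = k * (k + 1) / 2 := by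
  have hli := powers_li q n hq hcard γ hγ
  -- key combinatorial consequence of the Sidon property
  have pair_eq : ∀ p1 p2 i j : Fin k, N p1 + N p2 = N i + N j →
      (p1 = i ∧ p2 = j) ∨ (p1 = j ∧ p2 = i) := by
    intro p1 p2 i j hpsum
    have hset := hSidon p1 p2 i j hpsum
    have h1 : N p1 ∈ ({N i, N j} : Set ℕ) := by
      rw [← hset]; left; rfl
    simp only [Set.mem_insert_iff, Set.mem_singleton_iff] at h1
    rcases h1 with h1 | h1
    · left
      refine ⟨hNinj h1, hNinj ?_⟩
      omega
    · right
      refine ⟨hNinj h1, hNinj ?_⟩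
      omega
  have hNlt : ∀ i, N i < n := fun i => by have := (hrange i).2; omega
  have hvli : LinearIndependent F fun i : Fin k => γ ^ N i := by
    have := hli.comp (fun i : Fin k => (⟨N i, hNlt i⟩ : Fin n))
      (fun i j hij => hNinj (by simpa using hij))
    exact this
  have hblt : ∀ p : Fin k × Fin k, N p.1 + N p.2 < n := fun p => by
    have := (hrange p.1).2; have := (hrange p.2).2; omega
  refine ⟨?_, ?_, ?_⟩
  · rw [finrank_span_eq_card hvli, Fintype.card_fin]
  · -- Sidon space property
    intro a ha b hb c hc d hd ha0 hb0 hc0 hd0 hab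
    rw [Submodule.mem_span_range_iff_exists_fun] at ha hb hc hd
    obtain ⟨f, hf⟩ := ha
    obtain ⟨g, hg⟩ := hb
    obtain ⟨h, hh⟩ := hc
    obtain ⟨l, hl⟩ := hd
    have expand : ∀ (u v : Fin k → F),
        (∑ i, u i • γ ^ N i) * (∑ j, v j • γ ^ N j)
          = ∑ p : Fin k × Fin k, (u p.1 * v p.2) • γ ^ (N p.1 + N p.2) := by
      intro u v
      rw [Finset.sum_mul_sum, ← Finset.sum_product']
      refine Finset.sum_congr rfl fun p _ => ?_
      rw [pow_add, smul_mul_smul_comm]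
    have heq : ∑ p : Fin k × Fin k, (f p.1 * g p.2) • γ ^ (N p.1 + N p.2)
        = ∑ p : Fin k × Fin k, (h p.1 * l p.2) • γ ^ (N p.1 + N p.2) := by
      rw [← expand f g, ← expand h l, hf, hg, hh, hl, hab]
    rw [regroup_sum n γ _ _ hblt, regroup_sum n γ _ _ hblt] at heq
    have hcoef : ∀ t : Fin n,
        (∑ p ∈ Finset.univ.filter fun p : Fin k × Fin k =>
            (⟨N p.1 + N p.2, hblt p⟩ : Fin n) = t, f p.1 * g p.2)
          = ∑ p ∈ Finset.univ.filter fun p : Fin k × Fin k =>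
              (⟨N p.1 + N p.2, hblt p⟩ : Fin n) = t, h p.1 * l p.2 := by
      intro t
      have hz := Fintype.linearIndependent_iff.mp hli
        (fun t => (∑ p ∈ Finset.univ.filter fun p : Fin k × Fin k =>
            (⟨N p.1 + N p.2, hblt p⟩ : Fin n) = t, f p.1 * g p.2)
          - ∑ p ∈ Finset.univ.filter fun p : Fin k × Fin k =>
              (⟨N p.1 + N p.2, hblt p⟩ : Fin n) = t, h p.1 * l p.2)
        (by
          simp only [sub_smul, Finset.sum_sub_distrib]
          rw [heq, sub_self])
      have := hz t
      exact sub_eq_zero.mp this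
    have hfib : ∀ i j : Fin k,
        (Finset.univ.filter fun p : Fin k × Fin k =>
          (⟨N p.1 + N p.2, hblt p⟩ : Fin n) = (⟨N i + N j, hblt (i, j)⟩ : Fin n))
          = {(i, j), (j, i)} := by
      intro i j
      ext p
      simp only [Finset.mem_filter, Finset.mem_univ, true_and, Fin.mk.injEq,
        Finset.mem_insert, Finset.mem_singleton, Prod.ext_iff]
      constructor
      · intro hp
        rcases pair_eq p.1 p.2 i j hp with ⟨h1, h2⟩ | ⟨h1, h2⟩
        · exact Or.inl ⟨h1, h2⟩
        · exact Or.inr ⟨h1, h2⟩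
      · rintro (⟨h1, h2⟩ | ⟨h1, h2⟩) <;> rw [h1, h2]
        omega
    have Hoff : ∀ i j : Fin k, i ≠ j →
        f i * g j + f j * g i = h i * l j + h j * l i := by
      intro i j hij
      have := hcoef (⟨N i + N j, hblt (i, j)⟩ : Fin n)
      rw [hfib i j, Finset.sum_pair (by simp [Prod.ext_iff, hij]),
        Finset.sum_pair (by simp [Prod.ext_iff, hij])] at this
      exact this
    have Hdiag : ∀ i : Fin k, f i * g i = h i * l i := by
      intro i
      have := hcoef (⟨N i + N i, hblt (i, i)⟩ : Fin n)
      rw [hfib i i] at this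
      simpa using this
    have hne : ∃ i, h i ≠ 0 := by
      by_contra hcon
      push_neg at hcon
      apply hc0
      rw [← hh]
      simp [hcon]
    obtain ⟨j₀, hlj0⟩ : ∃ j₀, l j₀ ≠ 0 := by
      by_contra hcon
      push_neg at hcon
      apply hd0
      rw [← hl]
      simp [hcon]
    rcases sidon_core f g h l hne (sidon_rel f g h l Hoff Hdiag) hlj0 with ⟨μ, hμ⟩ | ⟨μ, hμ⟩
    · -- c = μ • a
      have hceq : c = μ • a := by
        rw [← hh, ← hf, Finset.smul_sum]
        refine Finset.sum_congr rfl fun i _ => ?_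
        rw [hμ i, mul_smul]
      have hμ0 : μ ≠ 0 := by
        rintro rfl
        rw [zero_smul] at hceq
        exact hc0 hceq
      have hspan_c : Submodule.span F {c} = Submodule.span F {a} := by
        rw [hceq]
        exact Submodule.span_singleton_smul_eq (isUnit_iff_ne_zero.mpr hμ0) a
      have hbd : b = μ • d := by
        apply mul_left_cancel₀ ha0
        rw [hab, hceq, mul_smul_comm, smul_mul_assoc]
      have hspan_d : Submodule.span F {d} = Submodule.span F {b} := by
        rw [hbd]
        exact (Submodule.span_singleton_smul_eq (isUnit_iff_ne_zero.mpr hμ0) d).symm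
      rw [hspan_c, hspan_d]
    · -- c = μ • b
      have hceq : c = μ • b := by
        rw [← hh, ← hg, Finset.smul_sum]
        refine Finset.sum_congr rfl fun i _ => ?_
        rw [hμ i, mul_smul]
      have hμ0 : μ ≠ 0 := by
        rintro rfl
        rw [zero_smul] at hceq
        exact hc0 hceq
      have hspan_c : Submodule.span F {c} = Submodule.span F {b} := by
        rw [hceq]
        exact Submodule.span_singleton_smul_eq (isUnit_iff_ne_zero.mpr hμ0) b
      have had : a = μ • d := by
        apply mul_left_cancel₀ hb0
        rw [mul_comm b a, hab, hceq, mul_smul_comm, smul_mul_assoc]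
      have hspan_d : Submodule.span F {d} = Submodule.span F {a} := by
        rw [had]
        exact (Submodule.span_singleton_smul_eq (isUnit_iff_ne_zero.mpr hμ0) d).symm
      rw [hspan_c, hspan_d, Set.pair_comm]
  · -- dimension of V * V
    set σ : Sym2 (Fin k) → ℕ :=
      Sym2.lift ⟨fun i j => N i + N j, fun i j => by dsimp; omega⟩ with hσ
    have hσmk : ∀ i j : Fin k, σ (s(i, j)) = N i + N j := fun i j => rfl
    have hσlt : ∀ z : Sym2 (Fin k), σ z < n := by
      intro z
      induction z using Sym2.ind with
      | _ i j =>
        rw [hσmk]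
        have := (hrange i).2; have := (hrange j).2; omega
    have hσinj : Function.Injective σ := by
      intro z₁ z₂
      refine Sym2.inductionOn₂ z₁ z₂ fun i j s t hz => ?_
      rw [hσmk, hσmk] at hz
      rcases pair_eq i j s t hz with ⟨h1, h2⟩ | ⟨h1, h2⟩
      · rw [h1, h2]
      · rw [h1, h2, Sym2.eq_swap]
    have hVV : Submodule.span F (Set.range fun i => γ ^ N i) *
        Submodule.span F (Set.range fun i => γ ^ N i)
        = Submodule.span F (Set.range fun z : Sym2 (Fin k) => γ ^ σ z) := by
      rw [Submodule.span_mul_span]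
      congr 1
      ext x
      constructor
      · intro hx
        rw [Set.mem_mul] at hx
        obtain ⟨y, ⟨i, rfl⟩, z, ⟨j, rfl⟩, rfl⟩ := hx
        exact ⟨s(i, j), by dsimp only; rw [hσmk i j, pow_add]⟩
      · rintro ⟨z, rfl⟩
        induction z using Sym2.ind with
        | _ i j =>
          rw [Set.mem_mul]
          exact ⟨γ ^ N i, ⟨i, rfl⟩, γ ^ N j, ⟨j, rfl⟩, by dsimp only; rw [hσmk i j, pow_add]⟩
    have hσli : LinearIndependent F fun z : Sym2 (Fin k) => γ ^ σ z := by
      have := hli.comp (fun z => (⟨σ z, hσlt z⟩ : Fin n))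
        (fun z₁ z₂ hzz => hσinj (by simpa using hzz))
      exact this
    rw [hVV, finrank_span_eq_card hσli, Sym2.card, Fintype.card_fin, Nat.choose_two_right]
    simp [mul_comm]
end

section
/- For k = q^m with m ≥ 1, the polynomial x^k + x + 1 over F_q divides x^{k²−1} − 1. -/
open Polynomial

theorem stmt12 {F : Type*} [Field F] [Fintype F] (q m k : ℕ)
    (hq : q = Fintype.card F) (hm : 1 ≤ m) (hk : k = q ^ m) :
    (X ^ k + X + 1 : Polynomial F) ∣ X ^ (k ^ 2 - 1) - 1 := by
  set p := ringChar F with hpdef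
  haveI : CharP F p := ringChar.charP F
  haveI hp : Fact p.Prime := ⟨CharP.char_is_prime F p⟩
  obtain ⟨n, -, hcard⟩ := FiniteField.card F p
  have hqp : q = p ^ (n : ℕ) := hq.trans hcard
  have hke : k = p ^ ((n : ℕ) * m) := by rw [hk, hqp, ← pow_mul]
  have hk2 : 2 ≤ k := by
    have hp2 : 2 ≤ p := hp.out.two_le
    have : (n : ℕ) * m ≥ 1 := Nat.one_le_iff_ne_zero.mpr (by
      have := n.pos
      positivity)
    calc 2 = 2 ^ 1 := rfl
    _ ≤ p ^ ((n : ℕ) * m) := Nat.pow_le_pow_left hp2 1 |>.trans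
        (Nat.pow_le_pow_right (by omega) this)
    _ = k := hke.symm
  set f : Polynomial F := X ^ k + X + 1 with hf
  -- f is not a unit
  have hdeg : f.degree = (k : ℕ) := by
    have h1 : (X + 1 : Polynomial F).degree < (X ^ k : Polynomial F).degree := by
      have hd : (X + 1 : Polynomial F).degree = 1 := by
        simpa using degree_X_add_C (1 : F)
      rw [degree_X_pow, hd]
      exact_mod_cast (by omega : 1 < k)
    rw [hf, add_assoc, degree_add_eq_left_of_degree_lt h1, degree_X_pow]
  have hnotunit : ¬ IsUnit f := not_isUnit_of_degree_pos f (by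
    rw [hdeg]; exact_mod_cast by omega)
  -- quotient ring
  set I : Ideal (Polynomial F) := Ideal.span {f} with hI
  haveI : Nontrivial (Polynomial F ⧸ I) := by
    refine Ideal.Quotient.nontrivial_iff.mpr ?_
    rw [hI, Ne, Ideal.span_singleton_eq_top]
    exact hnotunit
  haveI : CharP (Polynomial F ⧸ I) p :=
    charP_of_injective_algebraMap (algebraMap F (Polynomial F ⧸ I)).injective p
  set x : Polynomial F ⧸ I := Ideal.Quotient.mk I X with hx
  have h0 : x ^ k + x + 1 = 0 := by
    have : Ideal.Quotient.mk I f = 0 := by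
      rw [Ideal.Quotient.eq_zero_iff_mem, hI]
      exact Ideal.mem_span_singleton_self f
    simpa [hf, hx] using this
  have hxk : x ^ k = -(x + 1) := by linear_combination h0
  have hfrob : ∀ a b : Polynomial F ⧸ I, (a + b) ^ k = a ^ k + b ^ k := by
    intro a b
    rw [hke]
    exact add_pow_char_pow (x := a) (y := b) (p := p) (n := (n : ℕ) * m)
  have hkey : x ^ k ^ 2 = x := by
    have e1 : (x ^ k + x + 1) ^ k = 0 := by
      rw [h0]
      exact zero_pow (by omega : k ≠ 0)
    have e2 : (x ^ k + x + 1) ^ k = x ^ k ^ 2 + x ^ k + 1 := by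
      rw [hfrob (x ^ k + x) 1, hfrob (x ^ k) x, ← pow_mul, one_pow, sq]
    linear_combination e1 - e2 - h0
  have hdvd : f ∣ X ^ k ^ 2 - X := by
    rw [← Ideal.mem_span_singleton, ← hI, ← Ideal.Quotient.eq_zero_iff_mem]
    have : Ideal.Quotient.mk I (X ^ k ^ 2 - X) = x ^ k ^ 2 - x := by
      simp [hx]
    rw [this, hkey, sub_self]
  have hsplit : (X : Polynomial F) ^ k ^ 2 - X = X * (X ^ (k ^ 2 - 1) - 1) := by
    have : (X : Polynomial F) * X ^ (k ^ 2 - 1) = X ^ k ^ 2 := by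
      rw [← pow_succ']
      congr 1
      have : 1 ≤ k ^ 2 := Nat.one_le_pow _ _ (by omega)
      omega
    rw [mul_sub, this, mul_one]
  have hcop : IsCoprime f (X : Polynomial F) := by
    refine ⟨1, -(X ^ (k - 1) + 1), ?_⟩
    have hXk : (X : Polynomial F) ^ (k - 1) * X = X ^ k := by
      rw [← pow_succ]
      congr 1
      omega
    rw [hf]
    linear_combination -hXk
  have := hsplit ▸ hdvd
  exact hcop.dvd_of_dvd_mul_left this
end

section
/- For k = q^m with m ≥ 1, the linearized polynomial x^{q^k} + x^q + x over F_q splits completely in F_{q^{k²−1}}. -/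
open Polynomial

section LinPoly

variable {F : Type*} [Field F] [Fintype F]

/-- The linearized polynomial associated to `f`, with exponent base `q`. -/
noncomputable def Lz (q : ℕ) (f : F[X]) : F[X] :=
  f.sum fun i c => C c * X ^ q ^ i

lemma Lz_add (q : ℕ) (a b : F[X]) : Lz q (a + b) = Lz q a + Lz q b := by
  unfold Lz
  rw [Polynomial.sum_add_index] <;> intros <;> simp [add_mul]

lemma Lz_monomial (q n : ℕ) (c : F) : Lz q (monomial n c) = C c * X ^ q ^ n := by
  unfold Lz
  rw [Polynomial.sum_monomial_index]
  simp

lemma Lz_C_mul (q : ℕ) (c : F) (b : F[X]) : Lz q (C c * b) = C c * Lz q b := by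
  induction b using Polynomial.induction_on' with
  | add a b ha hb => rw [mul_add, Lz_add, Lz_add, ha, hb, mul_add]
  | monomial n d =>
    rw [C_mul_monomial, Lz_monomial, Lz_monomial, map_mul, mul_assoc]

lemma Lz_X_mul_sum (q : ℕ) (b : F[X]) :
    Lz q (X * b) = b.sum fun i c => C c * X ^ q ^ (i + 1) := by
  induction b using Polynomial.induction_on' with
  | add a b ha hb =>
    rw [mul_add, Lz_add, ha, hb, Polynomial.sum_add_index] <;> intros <;> simp [add_mul]
  | monomial n c =>
    rw [X_mul_monomial, Lz_monomial, Polynomial.sum_monomial_index]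
    simp

lemma Lz_X_pow' (q n : ℕ) : Lz q (X ^ n : F[X]) = X ^ q ^ n := by
  rw [X_pow_eq_monomial, Lz_monomial, map_one, one_mul]

lemma Lz_one' (q : ℕ) : Lz q (1 : F[X]) = X := by
  rw [← Polynomial.monomial_zero_one, Lz_monomial]
  simp

lemma Lz_X' (q : ℕ) : Lz q (X : F[X]) = X ^ q := by
  have := Lz_X_pow' (F := F) q 1
  rwa [pow_one, pow_one] at this

variable {q : ℕ} (hF : ∀ c : F, c ^ q = c) (p e : ℕ) [Fact p.Prime] [CharP F p]
  (hq : q = p ^ e)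

include hF hq

lemma Lz_X_mul (b : F[X]) : Lz q (X * b) = (Lz q b) ^ q := by
  have hmap : ∀ x : F[X], iterateFrobenius F[X] p e x = x ^ q := fun x => by
    rw [iterateFrobenius_def, hq]
  rw [Lz_X_mul_sum, ← hmap]
  unfold Lz
  rw [Polynomial.sum_def, Polynomial.sum_def, map_sum]
  refine Finset.sum_congr rfl fun i _ => ?_
  rw [hmap, mul_pow, ← map_pow, hF, ← pow_mul, ← pow_succ]

lemma Lz_X_pow_mul (n : ℕ) (b : F[X]) : Lz q (X ^ n * b) = (Lz q b) ^ q ^ n := by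
  induction n with
  | zero => simp
  | succ n ih =>
    rw [pow_succ, mul_comm (X ^ n) X, mul_assoc, Lz_X_mul hF p e hq, ih, ← pow_mul, ← pow_succ]

lemma Lz_mul (a b : F[X]) : Lz q (a * b) = (Lz q a).comp (Lz q b) := by
  induction a using Polynomial.induction_on' with
  | add a₁ a₂ h₁ h₂ => rw [add_mul, Lz_add, h₁, h₂, Lz_add, add_comp]
  | monomial n c =>
    rw [Lz_monomial, mul_comp, C_comp, pow_comp, X_comp, ← C_mul_X_pow_eq_monomial,
      mul_assoc, Lz_C_mul, Lz_X_pow_mul hF p e hq]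

end LinPoly

theorem stmt13 {F K : Type*} [Field F] [Fintype F] [Field K] [Algebra F K]
    (q m k : ℕ) (hq : q = Fintype.card F) (hm : 1 ≤ m) (hk : k = q ^ m)
    (hK : Module.finrank F K = k ^ 2 - 1) :
    Polynomial.Splits ((X ^ q ^ k + X ^ q + X : F[X]).map (algebraMap F K)) := by
  classical
  -- basic numerology
  have hq2 : 2 ≤ q := hq ▸ Fintype.one_lt_card
  have hk2 : 2 ≤ k := by
    calc 2 ≤ q := hq2
    _ = q ^ 1 := (pow_one q).symm
    _ ≤ q ^ m := Nat.pow_le_pow_right (by omega) hm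
    _ = k := hk.symm
  -- characteristic
  set p := ringChar F with hpdef
  haveI : CharP F p := ringChar.charP F
  obtain ⟨e, hpp, hcard⟩ := FiniteField.card F p
  haveI : Fact p.Prime := ⟨hpp⟩
  have hqpe : q = p ^ (e : ℕ) := by rw [hq, hcard]
  have hF : ∀ c : F, c ^ q = c := fun c => by rw [hq, FiniteField.pow_card]
  -- the conventional polynomial and its cofactor
  set P : F[X] := X ^ k + X + 1 with hP
  have hXk : X * (X ^ (k ^ 2 - 1) - 1 : F[X]) = P ^ k - P := by
    have hk' : k = p ^ (e * m) := by rw [hk, hqpe, ← pow_mul]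
    have hPk : P ^ k = X ^ (k ^ 2) + X ^ k + 1 := by
      have hmap : ∀ x : F[X], iterateFrobenius F[X] p (e * m) x = x ^ k := fun x => by
        rw [iterateFrobenius_def, hk']
      rw [← hmap, hP, map_add, map_add, map_one, hmap, hmap, ← pow_mul, ← pow_two]
    have h1 : (X : F[X]) * (X ^ (k ^ 2 - 1) - 1) = X ^ (k ^ 2) - X := by
      rw [mul_sub, mul_one, ← pow_succ', Nat.sub_add_cancel (by nlinarith)]
    rw [h1, hPk, hP]
    ring
  have hdvdX : P ∣ X * (X ^ (k ^ 2 - 1) - 1 : F[X]) := by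
    rw [hXk]
    exact dvd_sub (dvd_pow_self P (by omega)) dvd_rfl
  have hcop : IsCoprime P (X : F[X]) := by
    refine ⟨1, -(X ^ (k - 1) + 1), ?_⟩
    rw [hP]
    have : (X : F[X]) ^ (k - 1) * X = X ^ k := by
      rw [← pow_succ, Nat.sub_add_cancel (by omega)]
    ring_nf
    rw [← this]
    ring
  have hdvd : P ∣ (X ^ (k ^ 2 - 1) - 1 : F[X]) := hcop.dvd_of_dvd_mul_left hdvdX
  obtain ⟨s, hs⟩ := hdvd
  -- pass to linearized polynomials
  have hLP : Lz q P = X ^ q ^ k + X ^ q + X := by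
    rw [hP, Lz_add, Lz_add, Lz_X_pow', Lz_X', Lz_one']
  have hLr : Lz q (X ^ (k ^ 2 - 1) - 1 : F[X]) = X ^ q ^ (k ^ 2 - 1) - X := by
    have hneg : (monomial 0 (-1 : F) : F[X]) = -1 := by simp
    rw [sub_eq_add_neg, ← hneg, Lz_add, Lz_X_pow', Lz_monomial]
    simp [sub_eq_add_neg]
  have hXdvd : (X : F[X]) ∣ Lz q s := by
    rw [Lz, Polynomial.sum_def]
    refine Finset.dvd_sum fun i _ => Dvd.dvd.mul_left ?_ _
    exact dvd_pow_self X (by positivity)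
  obtain ⟨u, hu⟩ := hXdvd
  have hdvdL : Lz q P ∣ (X ^ q ^ (k ^ 2 - 1) - X : F[X]) := by
    rw [← hLr, hs, mul_comm, Lz_mul hF p e hqpe, hu, mul_comp, X_comp]
    exact Dvd.intro _ rfl
  -- finite dimensionality and cardinality of K
  have h4 : 4 ≤ k ^ 2 := by nlinarith
  have hfr : 0 < Module.finrank F K := by rw [hK]; omega
  haveI : FiniteDimensional F K := FiniteDimensional.of_finrank_pos hfr
  haveI : Finite K := Module.finite_of_finite F
  letI : Fintype K := Fintype.ofFinite K
  have hcardK : Fintype.card K = q ^ (k ^ 2 - 1) := by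
    rw [Module.card_eq_pow_finrank (K := F) (V := K), hK, hq]
  -- the big polynomial splits over K
  have hsplitsBig : Splits ((X ^ q ^ (k ^ 2 - 1) - X : F[X]).map (algebraMap F K)) := by
    have hmapped : (X ^ q ^ (k ^ 2 - 1) - X : F[X]).map (algebraMap F K)
        = (X ^ Fintype.card K - X : K[X]) := by
      rw [hcardK]; simp
    rw [hmapped, splits_iff_card_roots, FiniteField.roots_X_pow_card_sub_X,
      FiniteField.X_pow_card_sub_X_natDegree_eq K Fintype.one_lt_card]
    simp
  have hne : (X ^ q ^ (k ^ 2 - 1) - X : F[X]) ≠ 0 := by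
    apply FiniteField.X_pow_card_sub_X_ne_zero
    calc 1 < q := by omega
    _ = q ^ 1 := (pow_one q).symm
    _ ≤ q ^ (k ^ 2 - 1) := Nat.pow_le_pow_right (by omega) (by omega)
  rw [← hLP]
  exact hsplitsBig.of_dvd (Polynomial.map_ne_zero hne) (Polynomial.map_dvd _ hdvdL)
end

section
/- Let U and V be k-dimensional F_q-subspaces of F_{q^n}. Then dim(U ∩ αV) ≤ 1 for all α ∈ F_{q^n}^* if and only if for all nonzero a,c ∈ U and nonzero b,d ∈ V, ab = cd implies aF_q = cF_q and bF_q = dF_q. -/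
theorem stmt16 {F K : Type*} [Field F] [Fintype F] [Field K] [Fintype K] [Algebra F K]
    (k : ℕ) (U V : Submodule F K)
    (hU : Module.finrank F U = k) (hV : Module.finrank F V = k) :
    (∀ α : K, α ≠ 0 →
        Module.finrank F ↥(U ⊓ Submodule.map (LinearMap.mulLeft F α) V) ≤ 1) ↔
    (∀ a ∈ U, ∀ c ∈ U, ∀ b ∈ V, ∀ d ∈ V,
      a ≠ 0 → c ≠ 0 → b ≠ 0 → d ≠ 0 → a * b = c * d →
        Submodule.span F {a} = Submodule.span F {c} ∧
        Submodule.span F {b} = Submodule.span F {d}) := by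
  constructor
  · intro h a ha c hc b hb d hd ha0 hc0 hb0 hd0 habcd
    set α := a * d⁻¹ with hα
    have hα0 : α ≠ 0 := mul_ne_zero ha0 (inv_ne_zero hd0)
    set W := U ⊓ Submodule.map (LinearMap.mulLeft F α) V with hWdef
    have haW : a ∈ W := by
      refine ⟨ha, ⟨d, hd, ?_⟩⟩
      simp only [LinearMap.mulLeft_apply, hα]
      field_simp
    have hcW : c ∈ W := by
      refine ⟨hc, ⟨b, hb, ?_⟩⟩
      simp only [LinearMap.mulLeft_apply, hα]
      field_simp
      linear_combination habcd
    have hle : Submodule.span F {a} ≤ W :=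
      Submodule.span_le.2 (Set.singleton_subset_iff.2 haW)
    have heq : Submodule.span F {a} = W :=
      Submodule.eq_of_le_of_finrank_le hle
        (by rw [finrank_span_singleton ha0]; exact h α hα0)
    have hc' : c ∈ Submodule.span F ({a} : Set K) := heq ▸ hcW
    obtain ⟨μ, hμ⟩ := Submodule.mem_span_singleton.1 hc'
    have hμ0 : μ ≠ 0 := by rintro rfl; rw [zero_smul] at hμ; exact hc0 hμ.symm
    have h1 : Submodule.span F ({a} : Set K) = Submodule.span F {c} := by
      rw [← hμ, Submodule.span_singleton_smul_eq (IsUnit.mk0 μ hμ0)]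
    have hbd : b = μ • d := by
      have : a * b = a * (μ • d) := by
        rw [habcd, ← hμ, smul_mul_assoc, mul_smul_comm]
      exact mul_left_cancel₀ ha0 this
    refine ⟨h1, ?_⟩
    rw [hbd, Submodule.span_singleton_smul_eq (IsUnit.mk0 μ hμ0)]
  · intro h α hα0
    set W := U ⊓ Submodule.map (LinearMap.mulLeft F α) V with hWdef
    by_cases hbot : W = ⊥
    · rw [hbot]; simp
    · obtain ⟨x, hxW, hx0⟩ := Submodule.exists_mem_ne_zero_of_ne_bot hbot
      obtain ⟨hxU, b, hbV, hxb⟩ := hxW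
      simp only [LinearMap.mulLeft_apply] at hxb
      have hb0 : b ≠ 0 := by rintro rfl; rw [mul_zero] at hxb; exact hx0 hxb.symm
      have hle : W ≤ Submodule.span F {x} := by
        intro y hyW
        by_cases hy0 : y = 0
        · simp [hy0]
        · obtain ⟨hyU, d, hdV, hyd⟩ := hyW
          simp only [LinearMap.mulLeft_apply] at hyd
          have hd0 : d ≠ 0 := by rintro rfl; rw [mul_zero] at hyd; exact hy0 hyd.symm
          have hxy : x * d = y * b := by rw [← hxb, ← hyd]; ring
          have := h x hxU y hyU d hdV b hbV hx0 hy0 hd0 hb0 hxy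
          exact this.1 ▸ Submodule.mem_span_singleton_self y
      calc Module.finrank F W ≤ Module.finrank F (Submodule.span F ({x} : Set K)) :=
            Submodule.finrank_mono hle
        _ = 1 := finrank_span_singleton hx0
end

section
/- Let V be a Sidon space of dimension k in F_{q^n}, γ a primitive element of F_{q^n}, and {γ^{n_i} : i ∈ [(q^k−1)/(q−1)]} a set of nonzero representatives of all one-dimensional F_q-subspaces of V. Then the set S = {n_i} is a Sidon set in Z_{(q^n−1)/(q−1)}, i.e., all pairwise sums n_i + n_j (i ≥ j) are distinct modulo (q^n−1)/(q−1). -/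
open Polynomial

/-- An element of a finite extension fixed by `x ↦ x ^ |F|` lies in the image of `F`. -/
lemma mem_range_of_pow_card_eq {F K : Type*} [Field F] [Fintype F] [Field K] [Fintype K]
    [Algebra F K] (x : K) (hx : x ^ Fintype.card F = x) :
    ∃ μ : F, algebraMap F K μ = x := by
  classical
  set q := Fintype.card F with hq
  have hq1 : 1 < q := Fintype.one_lt_card
  set P : K[X] := X ^ q - X with hP
  have hPne : P ≠ 0 := FiniteField.X_pow_card_sub_X_ne_zero K hq1
  have hdeg : P.natDegree = q := FiniteField.X_pow_card_sub_X_natDegree_eq K hq1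
  set T : Finset K := P.roots.toFinset with hT
  have hTcard : T.card ≤ q := by
    calc T.card ≤ Multiset.card P.roots := P.roots.toFinset_card_le
    _ ≤ P.natDegree := P.card_roots' 
    _ = q := hdeg
  set Sf : Finset K := Finset.univ.image (algebraMap F K) with hSf
  have hSfcard : Sf.card = q := by
    rw [hSf, Finset.card_image_of_injective _ (algebraMap F K).injective, Finset.card_univ]
  have hsub : Sf ⊆ T := by
    intro y hy
    simp only [hSf, Finset.mem_image] at hy
    obtain ⟨μ, _, rfl⟩ := hy
    rw [hT, Multiset.mem_toFinset, mem_roots hPne]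
    simp only [hP, IsRoot, eval_sub, eval_pow, eval_X, sub_eq_zero]
    rw [← map_pow, FiniteField.pow_card]
  have hST : Sf = T := Finset.eq_of_subset_of_card_le hsub (by omega)
  have hxT : x ∈ T := by
    rw [hT, Multiset.mem_toFinset, mem_roots hPne]
    simp only [hP, IsRoot, eval_sub, eval_pow, eval_X, sub_eq_zero]
    exact hx
  rw [← hST, hSf, Finset.mem_image] at hxT
  obtain ⟨μ, _, hμ⟩ := hxT
  exact ⟨μ, hμ⟩

theorem stmt17 {F K : Type*} [Field F] [Fintype F] [Field K] [Fintype K] [Algebra F K]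
    (q n k : ℕ) (hq : q = Fintype.card F) (hcard : Fintype.card K = q ^ n)
    (V : Submodule F K) (hk : Module.finrank F V = k) (hV : IsSidon V)
    (γ : K) (hγ0 : γ ≠ 0) (hγ : ∀ x : K, x ≠ 0 → ∃ m : ℕ, γ ^ m = x)
    (S : Finset ℕ)
    (hmem : ∀ m ∈ S, γ ^ m ∈ V)
    (hinj : ∀ m ∈ S, ∀ m' ∈ S,
      Submodule.span F {γ ^ m} = Submodule.span F {γ ^ m'} → m = m')
    (hsurj : ∀ W : Submodule F K, W ≤ V → Module.finrank F W = 1 →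
      ∃ m ∈ S, W = Submodule.span F {γ ^ m}) :
    ∀ a ∈ S, ∀ b ∈ S, ∀ c ∈ S, ∀ d ∈ S,
      (a + b) % ((q ^ n - 1) / (q - 1)) = (c + d) % ((q ^ n - 1) / (q - 1)) →
      ({a, b} : Finset ℕ) = {c, d} := by
  classical
  have hq2 : 2 ≤ q := by rw [hq]; exact Fintype.one_lt_card
  have hdvd : (q - 1) ∣ (q ^ n - 1) := by
    have := Nat.sub_dvd_pow_sub_pow q 1 n
    simpa using this
  set N : ℕ := (q ^ n - 1) / (q - 1) with hN
  have hNmul : (q - 1) * N = q ^ n - 1 := Nat.mul_div_cancel' hdvd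
  have hγord : γ ^ (q ^ n - 1) = 1 := by
    have := FiniteField.pow_card_sub_one_eq_one γ hγ0
    rwa [hcard] at this
  -- main step, assuming c + d ≤ a + b
  have key : ∀ a ∈ S, ∀ b ∈ S, ∀ c ∈ S, ∀ d ∈ S, c + d ≤ a + b →
      (a + b) % N = (c + d) % N → ({a, b} : Finset ℕ) = {c, d} := by
    intro a ha b hb c hc d hd hle hmod
    have hNdvd : N ∣ (a + b) - (c + d) := (Nat.modEq_iff_dvd' hle).mp hmod.symm
    obtain ⟨t, ht⟩ := hNdvd
    have hab : a + b = c + d + N * t := by omega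
    set lam : K := γ ^ (N * t) with hlam
    have hlam0 : lam ≠ 0 := pow_ne_zero _ hγ0
    have hlamq : lam ^ Fintype.card F = lam := by
      have h1 : lam ^ (q - 1) = 1 := by
        rw [hlam, ← pow_mul]
        have : N * t * (q - 1) = (q ^ n - 1) * t := by
          rw [← hNmul]; ring
        rw [this, pow_mul, hγord, one_pow]
      have : lam ^ q = lam := by
        have hq' : q = (q - 1) + 1 := by omega
        rw [hq', pow_succ, h1, one_mul]
      rwa [← hq]
    obtain ⟨μ, hμ⟩ := mem_range_of_pow_card_eq lam hlamq
    have hμ0 : μ ≠ 0 := by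
      intro h; rw [h, map_zero] at hμ; exact hlam0 hμ.symm
    have hcV : μ • γ ^ c ∈ V := V.smul_mem μ (hmem c hc)
    have hc0 : μ • γ ^ c ≠ 0 := by
      rw [Algebra.smul_def, hμ]
      exact mul_ne_zero hlam0 (pow_ne_zero _ hγ0)
    have heq : γ ^ a * γ ^ b = (μ • γ ^ c) * γ ^ d := by
      rw [Algebra.smul_def, hμ, ← pow_add, hab, hlam]
      rw [pow_add, pow_add]
      ring
    have hspans := hV (γ ^ a) (hmem a ha) (γ ^ b) (hmem b hb) (μ • γ ^ c) hcV
      (γ ^ d) (hmem d hd) (pow_ne_zero _ hγ0) (pow_ne_zero _ hγ0) hc0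
      (pow_ne_zero _ hγ0) heq
    have hspanc : Submodule.span F {μ • γ ^ c} = Submodule.span F {γ ^ c} := by
      exact Submodule.span_singleton_smul_eq (isUnit_iff_ne_zero.mpr hμ0) _
    rw [hspanc] at hspans
    rw [Set.pair_eq_pair_iff] at hspans
    rcases hspans with ⟨h1, h2⟩ | ⟨h1, h2⟩
    · rw [hinj a ha c hc h1, hinj b hb d hd h2]
    · rw [hinj a ha d hd h1, hinj b hb c hc h2]
      exact Finset.pair_comm d c
  intro a ha b hb c hc d hd hmod
  rcases le_total (c + d) (a + b) with h | h
  · exact key a ha b hb c hc d hd h hmod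
  · exact (key c hc d hd a ha b hb h hmod.symm).symm
end

section
/- Let q be a prime power, k > 0 and r ≥ 2 integers, n = k(r+1), and γ ∈ F_{q^n} a root of an irreducible polynomial of degree r+1 over F_{q^k}. Then V = {u + u^q γ : u ∈ F_{q^k}} is an r-Sidon space of dimension k in F_{q^n}. -/
open Polynomial

/-- A subspace `V` of a field extension `K / F` is an *r-Sidon space* if whenever the
products of two `r`-tuples of nonzero elements of `V` coincide, the corresponding
multisets of one-dimensional subspaces spanned by the entries coincide. -/
def IsRSidon {F K : Type*} [Field F] [Field K] [Algebra F K] (r : ℕ)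
    (V : Submodule F K) : Prop :=
  ∀ a b : Fin r → K, (∀ i, a i ∈ V) → (∀ i, a i ≠ 0) →
    (∀ i, b i ∈ V) → (∀ i, b i ≠ 0) →
    ∏ i, a i = ∏ i, b i →
    (Finset.univ.val.map fun i => Submodule.span F {a i}) =
      (Finset.univ.val.map fun i => Submodule.span F {b i})

section SidonAux

variable {F L : Type*} [Field F] [Fintype F] [Field L] [Algebra F L]

lemma aux_exists_algebraMap_of_pow_card {x : L} (hx : x ^ Fintype.card F = x) :
    ∃ c : F, algebraMap F L c = x := by
  classical
  set q := Fintype.card F with hqdef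
  have hq1 : 1 < q := Fintype.one_lt_card
  have hne : (X ^ q - X : L[X]) ≠ 0 := FiniteField.X_pow_card_sub_X_ne_zero L hq1
  set T : Finset L := Finset.univ.image (algebraMap F L) with hT
  set S : Finset L := (X ^ q - X : L[X]).roots.toFinset with hS
  have hcardT : T.card = q := by
    rw [hT, Finset.card_image_of_injective _ (algebraMap F L).injective, Finset.card_univ]
  have hTS : T ⊆ S := by
    intro y hy
    rw [hT, Finset.mem_image] at hy
    obtain ⟨c, -, rfl⟩ := hy
    rw [hS, Multiset.mem_toFinset, mem_roots hne]
    simp [FiniteField.pow_card, ← map_pow, hqdef]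
  have hcardS : S.card ≤ q := by
    calc S.card ≤ (X ^ q - X : L[X]).roots.card := Multiset.toFinset_card_le _
      _ ≤ (X ^ q - X : L[X]).natDegree := Polynomial.card_roots' _
      _ = q := FiniteField.X_pow_card_sub_X_natDegree_eq L hq1
  have hTSeq : T = S := Finset.eq_of_subset_of_card_le hTS (hcardS.trans hcardT.ge)
  have hxS : x ∈ S := by
    rw [hS, Multiset.mem_toFinset, mem_roots hne]
    simp [hx]
  rw [← hTSeq, hT, Finset.mem_image] at hxS
  obtain ⟨c, -, hc⟩ := hxS
  exact ⟨c, hc⟩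

lemma aux_exists_smul_of_ratio_eq {u v : L} (hu : u ≠ 0) (hv : v ≠ 0)
    (h : u / u ^ Fintype.card F = v / v ^ Fintype.card F) :
    ∃ c : F, c ≠ 0 ∧ algebraMap F L c * u = v := by
  set q := Fintype.card F with hqdef
  have huq : u ^ q ≠ 0 := pow_ne_zero _ hu
  have hvq : v ^ q ≠ 0 := pow_ne_zero _ hv
  have hcross : u * v ^ q = v * u ^ q := by
    field_simp at h
    linear_combination h
  have hw : (v / u) ^ q = v / u := by
    rw [div_pow, div_eq_div_iff huq hu]
    linear_combination hcross
  obtain ⟨c, hc⟩ := aux_exists_algebraMap_of_pow_card hw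
  have hc0 : c ≠ 0 := by
    rintro rfl
    rw [map_zero] at hc
    apply hv
    have := hc.symm
    field_simp at this
    simpa using this
  refine ⟨c, hc0, ?_⟩
  rw [hc]
  field_simp

end SidonAux

theorem stmt19 {F L K : Type*} [Field F] [Fintype F] [Field L] [Field K]
    [Algebra F L] [Algebra L K] [Algebra F K] [IsScalarTower F L K]
    (q n k r : ℕ) (hq : q = Fintype.card F) (hkpos : 0 < k) (hr : 2 ≤ r)
    (hkL : Module.finrank F L = k) (hn : Module.finrank F K = n)
    (hnk : n = k * (r + 1))
    (p : Polynomial L) (hp : Irreducible p) (hdeg : p.natDegree = r + 1)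
    (γ : K) (hγ : Polynomial.aeval γ p = 0) :
    ∃ V : Submodule F K,
      (V : Set K) = {x | ∃ u : L, x = algebraMap L K u + algebraMap L K (u ^ q) * γ} ∧
      Module.finrank F V = k ∧ IsRSidon r V := by
  classical
  subst hq
  -- characteristic facts
  haveI hPF : Fact (ringChar F).Prime := ⟨CharP.char_is_prime F _⟩
  obtain ⟨m, -, hcard⟩ := FiniteField.card F (ringChar F)
  haveI : CharP L (ringChar F) :=
    charP_of_injective_algebraMap (algebraMap F L).injective _
  -- the linear map u ↦ u + u^q γ
  set T : L →ₗ[F] K :=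
    { toFun := fun u => algebraMap L K u + algebraMap L K (u ^ Fintype.card F) * γ
      map_add' := by
        intro x y
        rw [show (x + y) ^ Fintype.card F = x ^ Fintype.card F + y ^ Fintype.card F by
          rw [hcard, add_pow_char_pow]]
        rw [map_add, map_add]
        ring
      map_smul' := by
        intro c x
        rw [RingHom.id_apply, Algebra.smul_def, Algebra.smul_def, mul_pow, ← map_pow,
          FiniteField.pow_card, map_mul, map_mul, ← IsScalarTower.algebraMap_apply F L K]
        ring } with hTdef
  have hTapply : ∀ u : L,
      T u = algebraMap L K u + algebraMap L K (u ^ Fintype.card F) * γ := fun _ => rfl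
  -- facts about γ
  have hγint : IsIntegral L γ := IsAlgebraic.isIntegral ⟨p, hp.ne_zero, hγ⟩
  have hminnat : (minpoly L γ).natDegree = r + 1 := by
    have hC : (C p.leadingCoeff⁻¹ : L[X]) ≠ 0 := by
      rw [Ne, C_eq_zero, inv_eq_zero, leadingCoeff_eq_zero]
      exact hp.ne_zero
    rw [← minpoly.eq_of_irreducible hp hγ, natDegree_mul hp.ne_zero hC,
      natDegree_C, add_zero, hdeg]
  have hmindeg : (minpoly L γ).degree = ((r + 1 : ℕ) : WithBot ℕ) := by
    rw [degree_eq_natDegree (minpoly.ne_zero hγint), hminnat]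
  have hsmall : ∀ f : L[X], f.degree < ((r + 1 : ℕ) : WithBot ℕ) →
      Polynomial.aeval γ f = 0 → f = 0 := by
    intro f hdf hf0
    by_contra hne
    exact absurd (minpoly.degree_le_of_ne_zero L γ hne hf0)
      (by rw [hmindeg]; exact not_le.2 hdf)
  have hγL : ∀ t : L, γ ≠ algebraMap L K t := by
    intro t ht
    have h1 : minpoly L (algebraMap L K t) = X - C t := minpoly.eq_X_sub_C K t
    rw [← ht] at h1
    have h2 : (minpoly L γ).natDegree = 1 := by rw [h1, natDegree_X_sub_C]
    omega
  -- injectivity of T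
  have hTinj : Function.Injective T := by
    rw [injective_iff_map_eq_zero]
    intro u hu
    by_contra hu0
    have huq : u ^ Fintype.card F ≠ 0 := pow_ne_zero _ hu0
    apply hγL (-(u / u ^ Fintype.card F))
    have h0 : algebraMap L K u + algebraMap L K (u ^ Fintype.card F) * γ = 0 := hu
    have hKq : algebraMap L K (u ^ Fintype.card F) ≠ 0 := by
      simpa using huq
    rw [map_neg, map_div₀, ← neg_div, eq_div_iff hKq]
    linear_combination h0
  -- well-definedness of the span as a function of the ratio
  have key : ∀ s t : L, s ≠ 0 → t ≠ 0 →
      -(s / s ^ Fintype.card F) = -(t / t ^ Fintype.card F) →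
      (Submodule.span F {T s} : Submodule F K) = Submodule.span F {T t} := by
    intro s t hs ht hst
    rw [neg_inj] at hst
    obtain ⟨c, hc0, hc⟩ := aux_exists_smul_of_ratio_eq hs ht hst
    have hTt : T t = c • T s := by
      rw [← hc, ← Algebra.smul_def, map_smul]
    rw [hTt, Submodule.span_singleton_smul_eq (isUnit_iff_ne_zero.2 hc0)]
  refine ⟨LinearMap.range T, ?_, ?_, ?_⟩
  · ext x
    simp only [SetLike.mem_coe, LinearMap.mem_range, Set.mem_setOf_eq]
    exact exists_congr fun u => by rw [hTapply, eq_comm]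
  · rw [LinearMap.finrank_range_of_inj hTinj, hkL]
  · intro a b ha ha0 hb hb0 hab
    choose u hu using fun i => LinearMap.mem_range.1 (ha i)
    choose v hv using fun i => LinearMap.mem_range.1 (hb i)
    have hu0 : ∀ i, u i ≠ 0 := fun i h => ha0 i (by rw [← hu i, h, map_zero])
    have hv0 : ∀ i, v i ≠ 0 := fun i h => hb0 i (by rw [← hv i, h, map_zero])
    -- the auxiliary linear factors
    set g : L → L[X] :=
      fun t => C (t ^ Fintype.card F) * (X - C (-(t / t ^ Fintype.card F))) with hg
    have hgval : ∀ t : L, t ≠ 0 → Polynomial.aeval γ (g t) = T t := by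
      intro t ht
      have h1 : t ^ Fintype.card F * (t / t ^ Fintype.card F) = t := by
        field_simp
      have h2 : algebraMap L K (t ^ Fintype.card F) * algebraMap L K (t / t ^ Fintype.card F)
          = algebraMap L K t := by rw [← map_mul, h1]
      rw [hg, hTapply]
      simp only [map_mul, map_sub, aeval_C, aeval_X, map_neg]
      linear_combination h2
    have hgdeg : ∀ t : L, t ≠ 0 → (g t).degree = 1 := by
      intro t ht
      rw [hg, degree_C_mul (pow_ne_zero _ ht), degree_X_sub_C]
    have hg0 : ∀ t : L, t ≠ 0 → g t ≠ 0 := by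
      intro t ht h
      have := hgdeg t ht
      rw [h, degree_zero] at this
      exact absurd this (by simp)
    have hgroots : ∀ t : L, t ≠ 0 → (g t).roots = {-(t / t ^ Fintype.card F)} := by
      intro t ht
      rw [hg, roots_C_mul _ (pow_ne_zero _ ht), roots_X_sub_C]
    -- the two product polynomials agree
    have hPdeg : ∀ w : Fin r → L, (∀ i, w i ≠ 0) →
        (∏ i, g (w i)).degree = (r : WithBot ℕ) := by
      intro w hw
      rw [degree_prod]
      rw [Finset.sum_congr rfl fun i _ => hgdeg _ (hw i)]
      simp [Finset.card_univ]
    have hPne : ∀ w : Fin r → L, (∀ i, w i ≠ 0) → (∏ i, g (w i)) ≠ 0 := by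
      intro w hw h
      have := hPdeg w hw
      rw [h, degree_zero] at this
      exact absurd this (by simp)
    have haP : ∀ w : Fin r → L, Polynomial.aeval γ (∏ i, g (w i))
        = ∏ i, Polynomial.aeval γ (g (w i)) := fun w => by rw [map_prod]
    have hPQ : (∏ i, g (u i)) = ∏ i, g (v i) := by
      have hd : ((∏ i, g (u i)) - ∏ i, g (v i)).degree < ((r + 1 : ℕ) : WithBot ℕ) := by
        apply lt_of_le_of_lt (degree_sub_le _ _)
        rw [hPdeg u hu0, hPdeg v hv0, max_self]
        exact_mod_cast Nat.lt_succ_self r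
      have hz : Polynomial.aeval γ ((∏ i, g (u i)) - ∏ i, g (v i)) = 0 := by
        rw [map_sub, haP, haP,
          Finset.prod_congr rfl fun i _ => (hgval _ (hu0 i)).trans (hu i),
          Finset.prod_congr rfl fun i _ => (hgval _ (hv0 i)).trans (hv i), hab, sub_self]
      exact sub_eq_zero.1 (hsmall _ hd hz)
    -- compare root multisets
    have hroots : (Finset.univ.val.map fun i => -(u i / u i ^ Fintype.card F))
        = (Finset.univ.val.map fun i => -(v i / v i ^ Fintype.card F)) := by
      have h1 : ∀ w : Fin r → L, (∀ i, w i ≠ 0) →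
          (∏ i, g (w i)).roots
            = Finset.univ.val.map fun i => -(w i / w i ^ Fintype.card F) := by
        intro w hw
        rw [roots_prod _ _ (hPne w hw)]
        rw [Multiset.bind_congr fun i _ => hgroots _ (hw i)]
        exact Multiset.bind_singleton _ _
      rw [← h1 u hu0, ← h1 v hv0, hPQ]
    -- transfer to spans via a choice function
    set f : L → Submodule F K := fun x =>
      if h : ∃ s : L, s ≠ 0 ∧ -(s / s ^ Fintype.card F) = x
      then Submodule.span F {T h.choose} else ⊥ with hf
    have hfa : ∀ s : L, s ≠ 0 →
        f (-(s / s ^ Fintype.card F)) = Submodule.span F {T s} := by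
      intro s hs
      have hex : ∃ t : L, t ≠ 0 ∧
          -(t / t ^ Fintype.card F) = -(s / s ^ Fintype.card F) := ⟨s, hs, rfl⟩
      rw [hf]
      dsimp only
      rw [dif_pos hex]
      exact key _ _ hex.choose_spec.1 hs hex.choose_spec.2
    calc (Finset.univ.val.map fun i => Submodule.span F {a i})
        = Finset.univ.val.map fun i => f (-(u i / u i ^ Fintype.card F)) :=
          Multiset.map_congr rfl fun i _ => by rw [hfa _ (hu0 i), hu i]
      _ = (Finset.univ.val.map fun i => -(u i / u i ^ Fintype.card F)).map f := by
          rw [Multiset.map_map]; rfl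
      _ = (Finset.univ.val.map fun i => -(v i / v i ^ Fintype.card F)).map f := by
          rw [hroots]
      _ = Finset.univ.val.map fun i => f (-(v i / v i ^ Fintype.card F)) := by
          rw [Multiset.map_map]; rfl
      _ = Finset.univ.val.map fun i => Submodule.span F {b i} :=
          Multiset.map_congr rfl fun i _ => by rw [hfa _ (hv0 i), hv i]
end
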